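/- arXiv:1109.2696 — 8 statements merged into one kernel-verified Lean document; each statement's English description precedes it below -/
import Mathlib

section
/- In a finite simple graph in which every cycle has length at least 2k+1 (girth at least 2k+1), the number of edges m satisfies m < n^{1+1/k}, where n is the number of vertices and k ≥ 1 is an integer. -/
open Finset



/-- `x ↦ x * log (x-1)` is convex on `[2, ∞)`. -/
lemma convexOn_mul_log_sub_one :
    ConvexOn ℝ (Set.Ici (2:ℝ)) (fun x => x * Real.log (x - 1)) := by
  have h2 : interior (Set.Ici (2:ℝ)) = Set.Ioi 2 := interior_Ici
  refine convexOn_of_hasDerivWithinAt2_nonneg (convex_Ici 2)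
    (f' := fun x => Real.log (x - 1) + x / (x - 1))
    (f'' := fun x => 1 / (x - 1) - 1 / (x - 1) ^ 2) ?_ ?_ ?_ ?_
  · intro x hx
    have hx1 : x - 1 ≠ 0 := by simp only [Set.mem_Ici] at hx; nlinarith
    have hsub : ContinuousAt (fun y : ℝ => y - 1) x := by fun_prop
    have hc : ContinuousAt (fun y : ℝ => Real.log (y - 1)) x := by
      have := ContinuousAt.comp (g := Real.log) (f := fun y : ℝ => y - 1) (x := x) (Real.continuousAt_log hx1) hsub
      simpa [Function.comp_def] using this
    exact (continuousAt_id.mul hc).continuousWithinAt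
  · intro x hx
    rw [h2] at hx
    have hx1 : x - 1 ≠ 0 := by simp only [Set.mem_Ioi] at hx; nlinarith
    have hlog : HasDerivAt (fun y : ℝ => Real.log (y - 1)) (1 / (x - 1)) x := by
      have := (Real.hasDerivAt_log hx1).comp x ((hasDerivAt_id x).sub_const 1)
      simpa [one_div, Function.comp_def] using this
    have := (hasDerivAt_id x).mul hlog
    have heq : 1 * Real.log (x-1) + x * ((x-1)⁻¹) = Real.log (x - 1) + x / (x - 1) := by
      ring
    rw [h2]
    simpa [heq, one_div, div_eq_mul_inv, Pi.mul_def, id_eq] using this.hasDerivWithinAt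
  · intro x hx
    rw [h2] at hx
    have hx1 : x - 1 ≠ 0 := by simp only [Set.mem_Ioi] at hx; nlinarith
    have hlog : HasDerivAt (fun y : ℝ => Real.log (y - 1)) (1 / (x - 1)) x := by
      have := (Real.hasDerivAt_log hx1).comp x ((hasDerivAt_id x).sub_const 1)
      simpa [one_div, Function.comp_def] using this
    have hdiv : HasDerivAt (fun y : ℝ => y / (y - 1)) ((1*(x-1) - x*1) / (x - 1)^2) x :=
      (hasDerivAt_id x).div ((hasDerivAt_id x).sub_const 1) hx1
    have := hlog.add hdiv
    rw [h2]
    have h2' : 1 / (x-1) + (1*(x-1) - x*1) / (x - 1)^2 = 1 / (x - 1) - 1 / (x - 1) ^ 2 := by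
      field_simp
      ring
    show HasDerivWithinAt _ (1 / (x - 1) - 1 / (x - 1) ^ 2) _ x
    rw [← h2']
    exact this.hasDerivWithinAt
  · intro x hx
    rw [h2] at hx
    simp only [Set.mem_Ioi] at hx
    have h1 : (1:ℝ) ≤ x - 1 := by nlinarith
    have h0 : (0:ℝ) < x - 1 := by nlinarith
    rw [sub_nonneg, div_le_div_iff₀ (by positivity) h0]
    nlinarith


open Finset

set_option linter.unusedSectionVars false

namespace MooreAux

variable {V : Type*} [Fintype V] [DecidableEq V] (G : SimpleGraph V) [DecidableRel G.Adj]

/-- Candidate extensions: neighbors of the head which don't backtrack. -/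
def extCand : List V → Finset V
  | [] => ∅
  | a :: t => (G.neighborFinset a).filter (fun x => t.head? ≠ some x)

/-- The finset of non-backtracking walks of length `l` (lists of `l+1` vertices). -/
def nbw : ℕ → Finset (List V)
  | 0 => Finset.univ.image (fun v => [v])
  | l + 1 => (nbw l).biUnion (fun w => (extCand G w).image (fun x => x :: w))

lemma mem_nbw_zero {w : List V} : w ∈ nbw G 0 ↔ ∃ v, w = [v] := by
  simp [nbw, eq_comm]

lemma mem_nbw_succ {l : ℕ} {w' : List V} :
    w' ∈ nbw G (l+1) ↔ ∃ w ∈ nbw G l, ∃ x ∈ extCand G w, w' = x :: w := by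
  simp [nbw, eq_comm]

lemma nbw_length : ∀ (l : ℕ) (w : List V), w ∈ nbw G l → w.length = l + 1 := by
  intro l
  induction l with
  | zero => intro w hw; obtain ⟨v, rfl⟩ := (mem_nbw_zero G).mp hw; rfl
  | succ l ih =>
    intro w' hw'
    obtain ⟨w, hw, x, _, rfl⟩ := (mem_nbw_succ G).mp hw'
    simp [ih w hw]

/-- Structure of members of `nbw G l` for `l ≥ 1`. -/
lemma nbw_shape {l : ℕ} {w' : List V} (hw' : w' ∈ nbw G (l+1)) :
    ∃ x a t, w' = x :: a :: t ∧ (a :: t) ∈ nbw G l ∧ G.Adj a x ∧ t.head? ≠ some x := by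
  obtain ⟨w, hw, x, hx, rfl⟩ := (mem_nbw_succ G).mp hw'
  have hlen := nbw_length G l w hw
  match w, hw with
  | a :: t, hw =>
    refine ⟨x, a, t, rfl, hw, ?_, ?_⟩
    · have := (Finset.mem_filter.mp hx).1
      exact (SimpleGraph.mem_neighborFinset G a x).mp this
    · exact (Finset.mem_filter.mp hx).2

/-- Sum over `nbw G (l+1)` decomposes along the cons structure. -/
lemma sum_nbw_succ (l : ℕ) (F : List V → ℝ) :
    ∑ w' ∈ nbw G (l+1), F w' = ∑ w ∈ nbw G l, ∑ x ∈ extCand G w, F (x :: w) := by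
  rw [show nbw G (l+1) = (nbw G l).biUnion (fun w => (extCand G w).image (fun x => x :: w)) from rfl]
  rw [Finset.sum_biUnion]
  · refine Finset.sum_congr rfl (fun w _ => ?_)
    rw [Finset.sum_image]
    intro x _ y _ h
    exact (List.cons.injEq _ _ _ _ ▸ h).1
  · intro w₁ h₁ w₂ h₂ hne
    simp only [Finset.disjoint_left]
    rintro y hy₁ hy₂
    obtain ⟨x₁, _, rfl⟩ := Finset.mem_image.mp hy₁
    obtain ⟨x₂, _, h⟩ := Finset.mem_image.mp hy₂
    exact hne (congrArg List.tail h.symm)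

/-- The interior vertices of a walk (all but first and last). -/
def intr (w : List V) : List V := w.tail.dropLast

/-- Product of `(deg - 1)` over interior vertices. -/
noncomputable def ywt (G : SimpleGraph V) [DecidableRel G.Adj] (w : List V) : ℝ :=
  ((intr w).map (fun b => ((G.degree b : ℝ) - 1))).prod

/-- Product of `1/(deg - 1)` over interior vertices. -/
noncomputable def wt (G : SimpleGraph V) [DecidableRel G.Adj] (w : List V) : ℝ := (ywt G w)⁻¹

lemma intr_cons₂ (x a : V) {t : List V} (ht : t ≠ []) :
    intr (x :: a :: t) = a :: intr (a :: t) := by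
  simp [intr, List.dropLast_cons_of_ne_nil ht]

lemma ywt_cons (x a : V) {t : List V} (ht : t ≠ []) :
    ywt G (x :: a :: t) = ((G.degree a : ℝ) - 1) * ywt G (a :: t) := by
  simp [ywt, intr_cons₂ x a ht]

lemma ywt_pair (x a : V) : ywt G [x, a] = 1 := by simp [ywt, intr]

lemma ywt_single (a : V) : ywt G [a] = 1 := by simp [ywt, intr]

variable {G}

lemma degree_sub_one_pos (hdeg : ∀ v, 2 ≤ G.degree v) (v : V) :
    (0:ℝ) < (G.degree v : ℝ) - 1 := by
  have := hdeg v
  have : (2:ℝ) ≤ (G.degree v : ℝ) := by exact_mod_cast this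
  linarith

lemma ywt_pos (hdeg : ∀ v, 2 ≤ G.degree v) (w : List V) : 0 < ywt G w := by
  apply List.prod_pos
  intro a ha
  obtain ⟨b, _, rfl⟩ := List.mem_map.mp ha
  exact degree_sub_one_pos hdeg b

lemma wt_pos (hdeg : ∀ v, 2 ≤ G.degree v) (w : List V) : 0 < wt G w :=
  inv_pos.mpr (ywt_pos hdeg w)

lemma wt_mul_ywt (hdeg : ∀ v, 2 ≤ G.degree v) (w : List V) : wt G w * ywt G w = 1 :=
  inv_mul_cancel₀ (ywt_pos hdeg w).ne'

lemma wt_cons (hdeg : ∀ v, 2 ≤ G.degree v) (x a : V) {t : List V} (ht : t ≠ []) :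
    wt G (x :: a :: t) = wt G (a :: t) / ((G.degree a : ℝ) - 1) := by
  rw [wt, wt, ywt_cons (G := G) x a ht, mul_inv, div_eq_mul_inv, mul_comm]

lemma wt_pair (x a : V) : wt G [x, a] = 1 := by rw [wt, ywt_pair]; norm_num


variable (G)

/-- Evaluation of a two-variable function on the first two vertices of a walk. -/
def pe (g : V → V → ℝ) : List V → ℝ
  | a :: b :: _ => g a b
  | _ => 0

@[simp] lemma pe_cons₂ (g : V → V → ℝ) (a b : V) (t : List V) :
    pe g (a :: b :: t) = g a b := rfl

/-- Double counting over directed edges: swapping the roles. -/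
lemma adjsum_swap (g : V → V → ℝ) :
    ∑ u, ∑ v ∈ G.neighborFinset u, g u v = ∑ u, ∑ v ∈ G.neighborFinset u, g v u := by
  simp only [SimpleGraph.neighborFinset_eq_filter, Finset.sum_filter]
  rw [Finset.sum_comm]
  refine Finset.sum_congr rfl fun u _ => Finset.sum_congr rfl fun v _ => ?_
  by_cases h : G.Adj u v
  · rw [if_pos h, if_pos (G.adj_symm h)]
  · rw [if_neg h, if_neg (fun h' => h (G.adj_symm h'))]

lemma adjsum_deg (h : V → ℝ) :
    ∑ u, ∑ v ∈ G.neighborFinset u, h v = ∑ v, (G.degree v : ℝ) * h v := by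
  rw [← adjsum_swap]
  refine Finset.sum_congr rfl fun u _ => ?_
  rw [Finset.sum_const, ← SimpleGraph.card_neighborFinset_eq_degree, nsmul_eq_mul]

variable {G}

lemma extCand_of_nbw {l : ℕ} {a b : V} {t : List V} (hw : (a :: b :: t) ∈ nbw G (l+1)) :
    extCand G (a :: b :: t) = (G.neighborFinset a).erase b ∧ b ∈ G.neighborFinset a := by
  obtain ⟨x, a', t', heq, _, hadj, _⟩ := nbw_shape G hw
  obtain ⟨rfl, rfl, rfl⟩ : a = x ∧ b = a' ∧ t = t' := by
    simpa using heq
  constructor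
  · rw [extCand, ← Finset.filter_ne']
    refine Finset.filter_congr fun x _ => ?_
    simp [eq_comm]
  · exact (SimpleGraph.mem_neighborFinset G a b).mpr (G.adj_symm hadj)


/-- The master "stationarity" lemma: the weighted sum of a function of the first
two vertices over all non-backtracking walks equals its sum over directed edges. -/
lemma master (hdeg : ∀ v, 2 ≤ G.degree v) :
    ∀ l : ℕ, 1 ≤ l → ∀ g : V → V → ℝ,
      ∑ w ∈ nbw G l, wt G w * pe g w = ∑ u, ∑ v ∈ G.neighborFinset u, g v u := by
  intro l hl
  induction l, hl using Nat.le_induction with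
  | base =>
    intro g
    rw [sum_nbw_succ G 0]
    rw [show nbw G 0 = Finset.univ.image (fun v => [v]) from rfl]
    rw [Finset.sum_image (by intro x _ y _ h; simpa using h)]
    refine Finset.sum_congr rfl fun v _ => ?_
    have hcand : extCand G [v] = G.neighborFinset v := by
      rw [extCand]
      exact Finset.filter_true_of_mem (fun x _ => by simp)
    rw [hcand]
    refine Finset.sum_congr rfl fun x _ => ?_
    rw [wt_pair, pe_cons₂, one_mul]
  | succ l hl ih =>
    intro g
    set Tg : V → V → ℝ := fun a b =>
      ((∑ x ∈ G.neighborFinset a, g x a) - g b a) / ((G.degree a : ℝ) - 1) with hTg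
    rw [sum_nbw_succ G l]
    obtain ⟨l', rfl⟩ : ∃ l', l = l' + 1 := ⟨l - 1, by omega⟩
    have hstep : ∀ w ∈ nbw G (l'+1),
        ∑ x ∈ extCand G w, wt G (x :: w) * pe g (x :: w) = wt G w * pe Tg w := by
      intro w hw
      obtain ⟨a, b, t, rfl, _, _, _⟩ := nbw_shape G hw
      obtain ⟨hcand, hbmem⟩ := extCand_of_nbw hw
      rw [hcand]
      have hwt : ∀ x : V, wt G (x :: a :: b :: t) = wt G (a :: b :: t) / ((G.degree a : ℝ) - 1) :=
        fun x => wt_cons hdeg x a (by simp)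
      have : ∀ x ∈ (G.neighborFinset a).erase b,
          wt G (x :: a :: b :: t) * pe g (x :: a :: b :: t)
            = (wt G (a :: b :: t) / ((G.degree a : ℝ) - 1)) * g x a := by
        intro x _
        rw [hwt x, pe_cons₂]
      rw [Finset.sum_congr rfl this, ← Finset.mul_sum,
        Finset.sum_erase_eq_sub hbmem, pe_cons₂, hTg]
      have hne := (degree_sub_one_pos hdeg a).ne'
      field_simp
      try ring
    rw [Finset.sum_congr rfl hstep, ih Tg, ← adjsum_swap]
    refine Finset.sum_congr rfl fun u _ => ?_
    have hne := (degree_sub_one_pos hdeg u).ne'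
    rw [hTg]
    simp only
    rw [← Finset.sum_div, Finset.sum_sub_distrib, Finset.sum_const, nsmul_eq_mul,
      SimpleGraph.card_neighborFinset_eq_degree]
    field_simp
    try ring

lemma sum_wt_eq (hdeg : ∀ v, 2 ≤ G.degree v) {l : ℕ} (hl : 1 ≤ l) :
    ∑ w ∈ nbw G l, wt G w = ∑ v, (G.degree v : ℝ) := by
  obtain ⟨l', rfl⟩ : ∃ l', l = l' + 1 := ⟨l - 1, by omega⟩
  have h1 : ∑ w ∈ nbw G (l'+1), wt G w
      = ∑ w ∈ nbw G (l'+1), wt G w * pe (fun _ _ => (1:ℝ)) w := by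
    refine Finset.sum_congr rfl fun w hw => ?_
    obtain ⟨a, b, t, rfl, _, _, _⟩ := nbw_shape G hw
    rw [pe_cons₂, mul_one]
  rw [h1, master hdeg (l'+1) (by omega)]
  refine Finset.sum_congr rfl fun u _ => ?_
  rw [Finset.sum_const, ← SimpleGraph.card_neighborFinset_eq_degree, nsmul_eq_mul, mul_one]

lemma sum_wt_log (hdeg : ∀ v, 2 ≤ G.degree v) :
    ∀ l : ℕ, 1 ≤ l →
      ∑ w ∈ nbw G l, wt G w * Real.log (ywt G w)
        = ((l : ℝ) - 1) * ∑ u, (G.degree u : ℝ) * Real.log ((G.degree u : ℝ) - 1) := by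
  intro l hl
  induction l, hl using Nat.le_induction with
  | base =>
    have h1 : ∑ w ∈ nbw G 1, wt G w * Real.log (ywt G w) = 0 := by
      refine Finset.sum_eq_zero fun w hw => ?_
      obtain ⟨a, b, t, rfl, hmem, _, _⟩ := nbw_shape G hw
      obtain ⟨v, hv⟩ := (mem_nbw_zero G).mp hmem
      obtain ⟨rfl, rfl⟩ : b = v ∧ t = [] := by simpa using hv
      rw [ywt_pair, Real.log_one, mul_zero]
    rw [h1]
    norm_num
  | succ l hl ih =>
    rw [sum_nbw_succ G l]
    obtain ⟨l', rfl⟩ : ∃ l', l = l' + 1 := ⟨l - 1, by omega⟩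
    have hstep : ∀ w ∈ nbw G (l'+1),
        ∑ x ∈ extCand G w, wt G (x :: w) * Real.log (ywt G (x :: w))
          = wt G w * pe (fun a _ => Real.log ((G.degree a : ℝ) - 1)) w
            + wt G w * Real.log (ywt G w) := by
      intro w hw
      obtain ⟨a, b, t, rfl, _, _, _⟩ := nbw_shape G hw
      obtain ⟨hcand, hbmem⟩ := extCand_of_nbw hw
      have hconst : ∀ x ∈ (G.neighborFinset a).erase b,
          wt G (x :: a :: b :: t) * Real.log (ywt G (x :: a :: b :: t))
            = (wt G (a :: b :: t) / ((G.degree a : ℝ) - 1))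
              * (Real.log ((G.degree a : ℝ) - 1) + Real.log (ywt G (a :: b :: t))) := by
        intro x _
        rw [wt_cons hdeg x a (by simp), ywt_cons (G := G) x a (List.cons_ne_nil b t),
          Real.log_mul (degree_sub_one_pos hdeg a).ne' (ywt_pos hdeg _).ne']
      rw [hcand, Finset.sum_congr rfl hconst, Finset.sum_const,
        Finset.card_erase_of_mem hbmem, SimpleGraph.card_neighborFinset_eq_degree,
        nsmul_eq_mul, pe_cons₂]
      have hcast : ((G.degree a - 1 : ℕ) : ℝ) = (G.degree a : ℝ) - 1 := by
        have := hdeg a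
        push_cast [Nat.cast_sub (by omega : 1 ≤ G.degree a)]
        ring
      rw [hcast]
      have hne := (degree_sub_one_pos hdeg a).ne'
      field_simp
    rw [Finset.sum_congr rfl hstep, Finset.sum_add_distrib,
      master hdeg (l'+1) (by omega), ih, adjsum_deg]
    push_cast
    ring

/-- The AHL-type lower bound on the number of non-backtracking walks. -/
lemma nbw_card_lower [Nonempty V] (hconv : ConvexOn ℝ (Set.Ici (2:ℝ)) (fun x => x * Real.log (x - 1)))
    (hdeg : ∀ v, 2 ≤ G.degree v) (l : ℕ) (hl : 1 ≤ l) :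
    (∑ v, (G.degree v : ℝ)) *
      ((∑ v, (G.degree v : ℝ)) / (Fintype.card V : ℝ) - 1) ^ (l - 1)
        ≤ ((nbw G l).card : ℝ) := by
  set D : ℝ := ∑ v, (G.degree v : ℝ) with hD
  set n : ℝ := (Fintype.card V : ℝ) with hn
  have hn1 : (1:ℝ) ≤ n := by
    rw [hn]
    exact_mod_cast Fintype.card_pos
  have hn0 : (0:ℝ) < n := by linarith
  have hD2n : 2 * n ≤ D := by
    rw [hD, hn]
    calc (2:ℝ) * (Fintype.card V : ℝ) = ∑ _v : V, (2:ℝ) := by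
          rw [Finset.sum_const, nsmul_eq_mul, Finset.card_univ]; ring
    _ ≤ ∑ v, (G.degree v : ℝ) := by
          refine Finset.sum_le_sum fun v _ => ?_
          exact_mod_cast hdeg v
  have hD0 : (0:ℝ) < D := by linarith
  set d : ℝ := D / n with hd
  have hd2 : (2:ℝ) ≤ d := by
    rw [hd, le_div_iff₀ hn0]; linarith
  have hd10 : (0:ℝ) < d - 1 := by linarith
  -- the count as a weighted sum
  have hcount : ((nbw G l).card : ℝ) = ∑ w ∈ nbw G l, wt G w * ywt G w := by
    rw [Finset.card_eq_sum_ones, Nat.cast_sum]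
    exact Finset.sum_congr rfl fun w _ => by rw [wt_mul_ywt hdeg w, Nat.cast_one]
  have hsumwt := sum_wt_eq (G := G) hdeg hl
  have hp1 : ∑ w ∈ nbw G l, wt G w / D = 1 := by
    rw [← Finset.sum_div, hsumwt, ← hD, div_self hD0.ne']
  -- AM-GM
  have hgm := Real.geom_mean_le_arith_mean_weighted (nbw G l)
    (fun w => wt G w / D) (fun w => ywt G w)
    (fun w _ => le_of_lt (div_pos (wt_pos hdeg w) hD0)) hp1
    (fun w _ => le_of_lt (ywt_pos hdeg w))
  have harith : ∑ w ∈ nbw G l, (wt G w / D) * ywt G w = ((nbw G l).card : ℝ) / D := by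
    rw [hcount, Finset.sum_div]
    exact Finset.sum_congr rfl fun w _ => by ring
  -- compute the geometric mean via exp/log
  set c : ℝ := ∑ u, (G.degree u : ℝ) * Real.log ((G.degree u : ℝ) - 1) with hc
  have hgmval : ∏ w ∈ nbw G l, (ywt G w) ^ (wt G w / D)
      = Real.exp (((l:ℝ) - 1) * c / D) := by
    have h1 : ∀ w ∈ nbw G l, (ywt G w) ^ (wt G w / D)
        = Real.exp ((wt G w / D) * Real.log (ywt G w)) := by
      intro w _
      rw [Real.rpow_def_of_pos (ywt_pos hdeg w), mul_comm]
    rw [Finset.prod_congr rfl h1, ← Real.exp_sum]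
    congr 1
    have : ∀ w ∈ nbw G l, (wt G w / D) * Real.log (ywt G w)
        = (wt G w * Real.log (ywt G w)) / D := fun w _ => by ring
    rw [Finset.sum_congr rfl this, ← Finset.sum_div, sum_wt_log hdeg l hl, ← hc]
    try ring
  -- Jensen: c ≥ D * log (d - 1)
  have hjensen : D * Real.log (d - 1) ≤ c := by
    have hmem : ∀ u : V, (G.degree u : ℝ) ∈ Set.Ici (2:ℝ) := by
      intro u
      simp only [Set.mem_Ici]
      exact_mod_cast hdeg u
    have := hconv.map_sum_le (t := Finset.univ) (w := fun _ : V => 1 / n)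
      (p := fun u => (G.degree u : ℝ))
      (fun _ _ => by positivity)
      (by rw [Finset.sum_const, nsmul_eq_mul, Finset.card_univ, ← hn]; field_simp)
      (fun u _ => hmem u)
    have hsum : ∑ u : V, (1 / n) • (G.degree u : ℝ) = d := by
      simp only [smul_eq_mul, ← Finset.mul_sum]
      rw [← hD, hd]
      ring
    rw [hsum] at this
    have h2 : ∑ u : V, (1/n) • ((G.degree u : ℝ) * Real.log ((G.degree u : ℝ) - 1))
        = c / n := by
      simp only [smul_eq_mul, ← Finset.mul_sum]
      rw [← hc]
      ring
    rw [h2] at this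
    -- this : d * log (d-1) ≤ c / n
    rw [hd] at this ⊢
    calc D * Real.log (D / n - 1) = n * (D / n * Real.log (D / n - 1)) := by field_simp
    _ ≤ n * (c / n) := by
        apply mul_le_mul_of_nonneg_left _ (le_of_lt hn0)
        exact this
    _ = c := by field_simp
  -- combine
  have hlow : Real.exp (((l:ℝ) - 1) * Real.log (d - 1)) ≤ Real.exp (((l:ℝ) - 1) * c / D) := by
    apply Real.exp_le_exp.mpr
    have hl1 : (0:ℝ) ≤ (l:ℝ) - 1 := by
      have : (1:ℝ) ≤ (l:ℝ) := by exact_mod_cast hl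
      linarith
    rw [mul_div_assoc]
    apply mul_le_mul_of_nonneg_left _ hl1
    rw [le_div_iff₀ hD0, mul_comm]
    exact hjensen
  have hexp : Real.exp (((l:ℝ) - 1) * Real.log (d - 1)) = (d - 1) ^ (l - 1) := by
    have hcast : ((l:ℝ) - 1) = ((l - 1 : ℕ) : ℝ) := by
      have := hl
      push_cast [Nat.cast_sub hl]
      ring
    rw [hcast, Real.exp_nat_mul, Real.exp_log hd10]
  calc D * (d - 1) ^ (l - 1)
      = D * Real.exp (((l:ℝ) - 1) * Real.log (d - 1)) := by rw [hexp]
    _ ≤ D * Real.exp (((l:ℝ) - 1) * c / D) := by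
        exact mul_le_mul_of_nonneg_left hlow (le_of_lt hD0)
    _ = D * ∏ w ∈ nbw G l, (ywt G w) ^ (wt G w / D) := by rw [hgmval]
    _ ≤ D * (((nbw G l).card : ℝ) / D) := by
        apply mul_le_mul_of_nonneg_left _ (le_of_lt hD0)
        rw [← harith]
        exact hgm
    _ = ((nbw G l).card : ℝ) := by field_simp

variable (G)

/-- Build a graph walk from a function `ℕ → V` with consecutive adjacency. -/
def walkOfFn (f : ℕ → V) (s : ℕ) :
    (len : ℕ) → (∀ i, s ≤ i → i + 1 ≤ s + len → G.Adj (f i) (f (i+1))) →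
      G.Walk (f s) (f (s + len))
  | 0, _ => SimpleGraph.Walk.nil
  | len+1, h => (walkOfFn f s len (fun i h1 h2 => h i h1 (by omega))).concat
      (h (s+len) (by omega) (by omega))

lemma walkOfFn_length (f : ℕ → V) (s : ℕ) :
    ∀ (len : ℕ) (h : ∀ i, s ≤ i → i + 1 ≤ s + len → G.Adj (f i) (f (i+1))),
      (walkOfFn G f s len h).length = len := by
  intro len
  induction len with
  | zero => intro h; rfl
  | succ len ih =>
    intro h
    rw [walkOfFn, SimpleGraph.Walk.length_concat, ih]

lemma walkOfFn_support (f : ℕ → V) (s : ℕ) :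
    ∀ (len : ℕ) (h : ∀ i, s ≤ i → i + 1 ≤ s + len → G.Adj (f i) (f (i+1))),
      (walkOfFn G f s len h).support = (List.range (len+1)).map (fun i => f (s+i)) := by
  intro len
  induction len with
  | zero => intro h; rfl
  | succ len ih =>
    intro h
    rw [walkOfFn, SimpleGraph.Walk.support_concat, ih]
    simp [List.range_succ]

lemma walkOfFn_edges (f : ℕ → V) (s : ℕ) :
    ∀ (len : ℕ) (h : ∀ i, s ≤ i → i + 1 ≤ s + len → G.Adj (f i) (f (i+1))),
      (walkOfFn G f s len h).edges
        = (List.range len).map (fun i => s(f (s+i), f (s+i+1))) := by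
  intro len
  induction len with
  | zero => intro h; rfl
  | succ len ih =>
    intro h
    rw [walkOfFn, SimpleGraph.Walk.edges_concat, ih]
    simp only [List.range_succ, List.map_append, List.map_cons, List.map_nil,
      List.concat_eq_append, Nat.add_assoc]

variable {G}

/-- In a graph all of whose cycles have length `> L`, a non-backtracking
walk of length `≤ L` visits pairwise distinct vertices. -/
lemma no_repeat {L : ℕ} (hbig : ∀ (a : V) (c : G.Walk a a), c.IsCycle → L + 1 ≤ c.length)
    (f : ℕ → V)
    (hadj : ∀ i, i + 1 ≤ L → G.Adj (f i) (f (i+1)))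
    (hnb : ∀ i, i + 2 ≤ L → f i ≠ f (i+2)) :
    ∀ a b, a < b → b ≤ L → f a ≠ f b := by
  intro a b hab hbL heq
  classical
  set P : ℕ → Prop := fun m => ∃ s, s + (m+1) ≤ L ∧ f s = f (s + (m+1)) with hP
  have hPex : ∃ m, P m := ⟨b - a - 1, a, by omega, by
    rw [show a + (b - a - 1 + 1) = b by omega]; exact heq⟩
  obtain ⟨s0, hs0L, hs0⟩ := Nat.find_spec hPex
  set g : ℕ := Nat.find hPex + 1 with hg
  have hgL : s0 + g ≤ L := hs0L
  have hclosed : f s0 = f (s0 + g) := hs0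
  have hmin : ∀ p q, p < q → q ≤ L → q - p < g → f p ≠ f q := by
    intro p q h1 h2 h3 hpq
    exact Nat.find_min hPex (show q - p - 1 < Nat.find hPex by omega)
      ⟨p, by omega, by rw [show p + (q - p - 1 + 1) = q by omega]; exact hpq⟩
  have hg1 : g ≠ 1 := by
    intro h1
    exact (hadj s0 (by omega)).ne (by rw [h1] at hclosed; exact hclosed)
  have hg2 : g ≠ 2 := by
    intro h2
    exact hnb s0 (by omega) (by rw [h2] at hclosed; exact hclosed)
  have hg3 : 3 ≤ g := by omega
  -- build the cycle
  have hadj' : ∀ i, s0 ≤ i → i + 1 ≤ s0 + g → G.Adj (f i) (f (i+1)) :=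
    fun i _ h2 => hadj i (by omega)
  set p := walkOfFn G f s0 g hadj' with hp
  set c := p.copy rfl hclosed.symm with hc
  have hclen : c.length = g := by rw [hc, SimpleGraph.Walk.length_copy, hp, walkOfFn_length]
  have hcyc : c.IsCycle := by
    rw [SimpleGraph.Walk.isCycle_def]
    refine ⟨?_, ?_, ?_⟩
    · rw [SimpleGraph.Walk.isTrail_def, hc, SimpleGraph.Walk.edges_copy, hp, walkOfFn_edges]
      refine List.Nodup.map_on ?_ List.nodup_range
      intro i hi j hj hij
      simp only [List.mem_range] at hi hj
      rcases Sym2.eq_iff.mp hij with ⟨h1, h2⟩ | ⟨h1, h2⟩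
      · rcases Nat.lt_trichotomy i j with hlt | hE | hgt
        · exact absurd h1 (hmin (s0+i) (s0+j) (by omega) (by omega) (by omega))
        · exact hE
        · exact absurd h1.symm (hmin (s0+j) (s0+i) (by omega) (by omega) (by omega))
      · exfalso
        rcases Nat.lt_trichotomy i j with hlt | hE | hgt
        · rcases Nat.lt_or_ge (i+1) j with h3 | h3
          · exact (hmin (s0+i+1) (s0+j) (by omega) (by omega) (by omega)) h2
          · have : j = i + 1 := by omega
            subst this
            exact hnb (s0+i) (by omega) (by
              rw [show s0 + i + 2 = s0 + (i+1) + 1 by omega]; exact h1)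
        · subst hE
          exact (hmin (s0+i) (s0+i+1) (by omega) (by omega) (by omega)) h1
        · rcases Nat.lt_or_ge (j+1) i with h3 | h3
          · exact (hmin (s0+j+1) (s0+i) (by omega) (by omega) (by omega)) h1.symm
          · have : i = j + 1 := by omega
            subst this
            exact hnb (s0+j) (by omega) (by
              rw [show s0 + j + 2 = s0 + (j+1) + 1 by omega]; exact h2.symm)
    · intro hnil
      have := congrArg SimpleGraph.Walk.length hnil
      rw [hclen] at this
      simp only [SimpleGraph.Walk.length_nil] at this
      omega
    · have hsupp : c.support = (List.range (g+1)).map (fun i => f (s0+i)) := by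
        rw [hc, SimpleGraph.Walk.support_copy, hp, walkOfFn_support]
      rw [hsupp, List.range_succ_eq_map, List.map_cons, List.tail_cons, List.map_map]
      refine List.Nodup.map_on ?_ List.nodup_range
      intro i hi j hj hij
      simp only [List.mem_range] at hi hj
      simp only [Function.comp] at hij
      rcases Nat.lt_trichotomy i j with hlt | hE | hgt
      · exact absurd hij (hmin (s0+(i+1)) (s0+(j+1)) (by omega) (by omega) (by omega))
      · exact hE
      · exact absurd hij.symm (hmin (s0+(j+1)) (s0+(i+1)) (by omega) (by omega) (by omega))
  have := hbig _ c hcyc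
  omega

/-- Members of `nbw G l` satisfy adjacency and non-backtracking conditions (via `getD`). -/
lemma nbw_props (d : V) : ∀ (l : ℕ) (w : List V), w ∈ nbw G l →
    (∀ i, i + 1 ≤ l → G.Adj (w.getD i d) (w.getD (i+1) d)) ∧
    (∀ i, i + 2 ≤ l → w.getD i d ≠ w.getD (i+2) d) := by
  intro l
  induction l with
  | zero => intro w _; exact ⟨fun i hi => by omega, fun i hi => by omega⟩
  | succ l ih =>
    intro w' hw'
    obtain ⟨x, a, t, rfl, hmem, hadj, hne⟩ := nbw_shape G hw'
    obtain ⟨ihadj, ihnb⟩ := ih (a :: t) hmem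
    constructor
    · intro i hi
      match i with
      | 0 => exact G.adj_symm hadj
      | (j+1) =>
        simp only [List.getD_cons_succ]
        exact ihadj j (by omega)
    · intro i hi
      match i with
      | 0 =>
        simp only [List.getD_cons_zero, List.getD_cons_succ]
        -- x ≠ (a :: t).getD 1
        have hlen := nbw_length G l (a :: t) hmem
        match t, hi with
        | (y :: t'), _ =>
          simp only [List.getD_cons_succ, List.getD_cons_zero]
          intro hxy
          exact hne (by rw [hxy]; rfl)
      | (j+1) =>
        simp only [List.getD_cons_succ]
        exact ihnb j (by omega)

/-- Non-backtracking walks of length `k` are determined by their endpoints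
when every cycle has length at least `2k+1`. -/
lemma nbw_endpoint_injOn (d : V) (k : ℕ) (hk : 1 ≤ k)
    (hbig : ∀ (a : V) (c : G.Walk a a), c.IsCycle → 2*k + 1 ≤ c.length) :
    Set.InjOn (fun w : List V => (w.getD 0 d, w.getD k d)) ↑(nbw G k) := by
  intro w hw w' hw' hpair
  simp only [Finset.coe_mem, Finset.mem_coe] at hw hw'
  by_contra hne
  have hlw := nbw_length G k w hw
  have hlw' := nbw_length G k w' hw'
  obtain ⟨hadjw, hnbw⟩ := nbw_props d k w hw
  obtain ⟨hadjw', hnbw'⟩ := nbw_props d k w' hw'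
  have h0 : w.getD 0 d = w'.getD 0 d := congrArg Prod.fst hpair
  have hkk : w.getD k d = w'.getD k d := congrArg Prod.snd hpair
  -- find a disagreement
  have hex : ∃ i, i ≤ k ∧ w.getD i d ≠ w'.getD i d := by
    by_contra hall
    push_neg at hall
    apply hne
    refine List.ext_getElem (by omega) (fun i h1 h2 => ?_)
    rw [← List.getD_eq_getElem w d h1, ← List.getD_eq_getElem w' d h2]
    exact hall i (by omega)
  obtain ⟨i0, hi0k, hi0⟩ := hex
  classical
  set Q : ℕ → Prop := fun i => w.getD i d ≠ w'.getD i d with hQ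
  set c : ℕ := Nat.findGreatest Q k with hcdef
  have hQc : Q c := Nat.findGreatest_spec hi0k hi0
  have hck : c ≤ k := Nat.findGreatest_le k
  have hc0 : c ≠ 0 := fun h => hQc (by rw [h]; exact h0)
  have hckne : c ≠ k := fun h => hQc (by rw [h]; exact hkk)
  have hagree : ∀ j, c < j → j ≤ k → w.getD j d = w'.getD j d :=
    fun j h1 h2 => not_ne_iff.mp (Nat.findGreatest_is_greatest h1 h2)
  set fw : ℕ → V := fun i => w.getD i d with hfw
  set fw' : ℕ → V := fun i => w'.getD i d with hfw'
  set h : ℕ → V := fun i => if i ≤ c + 1 then fw i else fw' (2*c + 2 - i) with hh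
  have hc1k : c + 1 ≤ k := by omega
  -- key evaluations
  have he1 : ∀ i, i ≤ c + 1 → h i = fw i := fun i hi => if_pos hi
  have he2 : ∀ i, c + 1 < i → h i = fw' (2*c + 2 - i) := fun i hi => if_neg (by omega)
  have hcc1 : fw (c+1) = fw' (c+1) := hagree (c+1) (by omega) (by omega)
  -- adjacency for h
  have hadjh : ∀ i, i + 1 ≤ 2*c + 2 → G.Adj (h i) (h (i+1)) := by
    intro i hi
    rcases Nat.lt_or_ge (i+1) (c+2) with h1 | h1
    · rw [he1 i (by omega), he1 (i+1) (by omega)]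
      exact hadjw i (by omega)
    · rcases Nat.eq_or_lt_of_le h1 with h2 | h2
      · -- i = c + 1
        have hieq : i = c + 1 := by omega
        subst hieq
        rw [he1 (c+1) (by omega), he2 (c+2) (by omega), hcc1,
          show 2*c+2 - (c+2) = c by omega]
        exact G.adj_symm (hadjw' c (by omega))
      · -- i ≥ c + 2
        rw [he2 i (by omega), he2 (i+1) (by omega)]
        have : 2*c + 2 - i = (2*c + 2 - (i+1)) + 1 := by omega
        rw [this]
        exact G.adj_symm (hadjw' (2*c + 2 - (i+1)) (by omega))
  -- non-backtracking for h
  have hnbh : ∀ i, i + 2 ≤ 2*c + 2 → h i ≠ h (i+2) := by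
    intro i hi
    rcases Nat.lt_or_ge (i+2) (c+2) with h1 | h1
    · rw [he1 i (by omega), he1 (i+2) (by omega)]
      exact hnbw i (by omega)
    · rcases Nat.eq_or_lt_of_le h1 with h2 | h2
      · -- i = c
        have hieq : i = c := by omega
        subst hieq
        rw [he1 c (by omega), he2 (c+2) (by omega), show 2*c+2 - (c+2) = c by omega]
        exact hQc
      · rcases Nat.eq_or_lt_of_le h2 with h3 | h3
        · -- i = c + 1
          have hieq : i = c + 1 := by omega
          subst hieq
          rw [he1 (c+1) (by omega), he2 (c+3) (by omega), hcc1,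
            show 2*c+2 - (c+3) = c - 1 by omega]
          intro hcontra
          exact hnbw' (c-1) (by omega) (by
            rw [show c - 1 + 2 = c + 1 by omega]; exact hcontra.symm)
        · -- i ≥ c + 2
          rw [he2 i (by omega), he2 (i+2) (by omega)]
          have heq2 : 2*c + 2 - i = (2*c + 2 - (i+2)) + 2 := by omega
          intro hcontra
          exact hnbw' (2*c + 2 - (i+2)) (by omega) (by rw [← heq2]; exact hcontra.symm)
  -- closed endpoints
  have hclosed : h 0 = h (2*c + 2) := by
    rw [he1 0 (by omega), he2 (2*c+2) (by omega), show 2*c+2 - (2*c+2) = 0 by omega]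
    exact h0
  have hbig' : ∀ (a : V) (cw : G.Walk a a), cw.IsCycle → (2*c + 2) + 1 ≤ cw.length :=
    fun a cw hcyc => le_trans (by omega) (hbig a cw hcyc)
  exact no_repeat hbig' h hadjh hnbh 0 (2*c+2) (by omega) (by omega) hclosed

/-- Upper bound on the number of non-backtracking walks from girth. -/
lemma nbw_card_upper (d : V) (k : ℕ) (hk : 1 ≤ k)
    (hbig : ∀ (a : V) (c : G.Walk a a), c.IsCycle → 2*k + 1 ≤ c.length) :
    (nbw G k).card ≤ Fintype.card V * Fintype.card V := by
  have := Finset.card_le_card_of_injOn (t := (Finset.univ : Finset (V × V)))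
    (fun w : List V => (w.getD 0 d, w.getD k d))
    (fun w _ => Finset.mem_univ _) (nbw_endpoint_injOn d k hk hbig)
  simpa [Fintype.card_prod] using this

/-- Case 2: all degrees exceed `n^(1/k)`; then a contradiction with the girth. -/
lemma case2 [Nonempty V]
    (hconv : ConvexOn ℝ (Set.Ici (2:ℝ)) (fun x => x * Real.log (x - 1)))
    (k : ℕ) (hk : 1 ≤ k)
    (hbig : ∀ (a : V) (c : G.Walk a a), c.IsCycle → 2*k + 1 ≤ c.length)
    (hdeg : ∀ v, (Fintype.card V : ℝ) ^ ((1:ℝ)/(k:ℝ)) < (G.degree v : ℝ)) :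
    (G.edgeFinset.card : ℝ) < (Fintype.card V : ℝ) ^ ((1 : ℝ) + 1 / (k : ℝ)) := by
  by_contra hcon
  push_neg at hcon
  set nR : ℝ := (Fintype.card V : ℝ) with hnR
  have hn1 : (1:ℝ) ≤ nR := by
    rw [hnR]; exact_mod_cast Fintype.card_pos
  have hn0 : (0:ℝ) < nR := by linarith
  set x : ℝ := nR ^ ((1:ℝ)/(k:ℝ)) with hx
  have hx0 : (0:ℝ) < x := Real.rpow_pos_of_pos hn0 _
  have hx1 : (1:ℝ) ≤ x := by
    rw [hx]
    calc (1:ℝ) = (1:ℝ) ^ ((1:ℝ)/(k:ℝ)) := (Real.one_rpow _).symm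
    _ ≤ nR ^ ((1:ℝ)/(k:ℝ)) := Real.rpow_le_rpow (by norm_num) hn1 (by positivity)
  have hxk : x ^ (k : ℕ) = nR := by
    rw [hx, ← Real.rpow_natCast (nR ^ ((1:ℝ)/(k:ℝ))) k, ← Real.rpow_mul (le_of_lt hn0)]
    rw [show (1:ℝ)/(k:ℝ) * (k:ℕ) = 1 by
      field_simp]
    exact Real.rpow_one nR
  have hdeg2 : ∀ v, 2 ≤ G.degree v := by
    intro v
    have := hdeg v
    have h1 : (1:ℝ) < (G.degree v : ℝ) := lt_of_le_of_lt hx1 this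
    exact_mod_cast Nat.lt_of_lt_of_le (by exact_mod_cast h1) (le_refl _)
  -- degree sum
  set D : ℝ := ∑ v, (G.degree v : ℝ) with hD
  have hDm : D = 2 * (G.edgeFinset.card : ℝ) := by
    rw [hD]
    rw [show ∑ v, ((G.degree v : ℕ) : ℝ) = ((∑ v, G.degree v : ℕ) : ℝ) by push_cast; ring]
    rw [SimpleGraph.sum_degrees_eq_twice_card_edges]
    push_cast; ring
  have hm : nR * x ≤ (G.edgeFinset.card : ℝ) := by
    have : nR ^ ((1:ℝ) + 1/(k:ℝ)) = nR * x := by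
      rw [Real.rpow_add hn0, Real.rpow_one, hx]
    linarith [hcon, this ▸ hcon]
  have hD2nx : 2 * (nR * x) ≤ D := by rw [hDm]; linarith
  -- lower bound on D/n - 1
  have hdn : 2 * x - 1 ≤ D / nR - 1 := by
    have h2 : 2 * x ≤ D / nR := by
      rw [le_div_iff₀ hn0]
      nlinarith [hD2nx]
    linarith
  have hxd : x ≤ 2*x - 1 := by linarith
  have hbase : x ≤ D / nR - 1 := le_trans hxd hdn
  -- combine with walk counts
  have hlower := nbw_card_lower (G := G) hconv hdeg2 k hk
  have hupper := nbw_card_upper (G := G) (Classical.ofNonempty) k hk hbig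
  have hpow : x ^ (k - 1 : ℕ) ≤ (D / nR - 1) ^ (k - 1 : ℕ) :=
    pow_le_pow_left₀ (le_of_lt hx0) hbase _
  have hDpos : (0:ℝ) < D := by nlinarith
  have hchain : 2 * (nR * x) * x ^ (k - 1 : ℕ) ≤ nR * nR := by
    calc 2 * (nR * x) * x ^ (k - 1 : ℕ)
        ≤ D * (D / nR - 1) ^ (k - 1 : ℕ) := by
          apply mul_le_mul hD2nx hpow (by positivity)
          exact le_of_lt hDpos
    _ ≤ ((nbw G k).card : ℝ) := hlower
    _ ≤ nR * nR := by
          have := hupper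
          have h2 : ((nbw G k).card : ℝ) ≤ ((Fintype.card V * Fintype.card V : ℕ) : ℝ) := by
            exact_mod_cast this
          rw [hnR]; push_cast at h2 ⊢; linarith
  have hxx : x ^ (k - 1 : ℕ) * x = nR := by
    conv_rhs => rw [← hxk, show (k:ℕ) = (k-1) + 1 by omega, pow_succ]
  have : 2 * nR * nR ≤ nR * nR := by nlinarith [hchain, hxx]
  nlinarith


section Delete

variable (G)

/-- The induced subgraph on the complement of a vertex. -/
def sdel (v : V) : SimpleGraph {u : V // u ≠ v} := G.comap (fun u => (u : V))

instance sdelDecidable (v : V) : DecidableRel (sdel G v).Adj :=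
  fun a b => ‹DecidableRel G.Adj› a.1 b.1

lemma sdel_card (v : V) : Fintype.card {u : V // u ≠ v} = Fintype.card V - 1 := by
  have h1 := Fintype.card_subtype_compl (fun u : V => u = v)
  rw [Fintype.card_subtype_eq] at h1
  exact h1

lemma sdel_cycles (v : V) (k : ℕ)
    (hbig : ∀ (a : V) (c : G.Walk a a), c.IsCycle → 2*k + 1 ≤ c.length) :
    ∀ (a : {u : V // u ≠ v}) (c : (sdel G v).Walk a a), c.IsCycle → 2*k + 1 ≤ c.length := by
  intro a c hc
  have hemb : (sdel G v) ↪g G := SimpleGraph.Embedding.comap (Function.Embedding.subtype _) G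
  have hmap := hc.map (f := hemb.toHom) hemb.injective
  have hlen := SimpleGraph.Walk.length_map hemb.toHom c
  have := hbig _ _ hmap
  omega

lemma sdel_degree (v : V) (u : V) (hu : u ≠ v) :
    ((sdel G v).degree ⟨u, hu⟩ : ℝ) = (G.degree u : ℝ) - (if G.Adj u v then 1 else 0) := by
  have hcardeq : (sdel G v).degree ⟨u,hu⟩ = ((G.neighborFinset u).erase v).card := by
    rw [← SimpleGraph.card_neighborFinset_eq_degree]
    refine Finset.card_bij' (fun w _ => (w : V))
      (fun w hw => ⟨w, (Finset.mem_erase.mp hw).1⟩) ?_ ?_ ?_ ?_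
    · intro a ha
      have hadj : (sdel G v).Adj ⟨u,hu⟩ a := (SimpleGraph.mem_neighborFinset _ _ _).mp ha
      exact Finset.mem_erase.mpr ⟨a.2, (SimpleGraph.mem_neighborFinset _ _ _).mpr hadj⟩
    · intro w hw
      obtain ⟨hwv, hwadj⟩ := Finset.mem_erase.mp hw
      have : G.Adj u w := (SimpleGraph.mem_neighborFinset _ _ _).mp hwadj
      exact (SimpleGraph.mem_neighborFinset _ _ _).mpr this
    · intro a ha; rfl
    · intro w hw; rfl
  rw [hcardeq]
  by_cases hav : G.Adj u v
  · have hvmem : v ∈ G.neighborFinset u := (SimpleGraph.mem_neighborFinset _ _ _).mpr hav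
    rw [Finset.card_erase_of_mem hvmem, if_pos hav,
      SimpleGraph.card_neighborFinset_eq_degree]
    have h1 : 1 ≤ G.degree u := by
      rw [← SimpleGraph.card_neighborFinset_eq_degree]
      exact Finset.card_pos.mpr ⟨v, hvmem⟩
    push_cast [Nat.cast_sub h1]
    ring
  · rw [Finset.erase_eq_of_notMem
      (fun hmem => hav ((SimpleGraph.mem_neighborFinset _ _ _).mp hmem)), if_neg hav,
      SimpleGraph.card_neighborFinset_eq_degree, sub_zero]

lemma sdel_edges (v : V) :
    (((sdel G v).edgeFinset.card : ℕ) : ℝ) = (G.edgeFinset.card : ℝ) - (G.degree v : ℝ) := by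
  have hsum2 : ∑ u ∈ Finset.univ.erase v, (if G.Adj u v then (1:ℝ) else 0)
      = (G.degree v : ℝ) := by
    rw [Finset.sum_erase_eq_sub (Finset.mem_univ v), if_neg (G.irrefl)]
    rw [Finset.sum_boole]
    rw [show Finset.univ.filter (fun u => G.Adj u v) = G.neighborFinset v from by
      rw [SimpleGraph.neighborFinset_eq_filter]
      exact Finset.filter_congr fun u _ => by rw [SimpleGraph.adj_comm]]
    rw [SimpleGraph.card_neighborFinset_eq_degree]
    ring
  have hdegsum : ∑ u' : {u : V // u ≠ v}, ((sdel G v).degree u' : ℝ)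
      = (∑ u, (G.degree u : ℝ)) - 2 * (G.degree v : ℝ) := by
    have h1 := Finset.sum_subtype (p := fun u : V => u ≠ v)
      (F := (inferInstance : Fintype {u : V // u ≠ v})) (Finset.univ.erase v)
      (fun u => by simp [Finset.mem_erase])
      (fun u => (G.degree u : ℝ) - if G.Adj u v then 1 else 0)
    have h2 : ∑ u' : {u : V // u ≠ v}, ((sdel G v).degree u' : ℝ)
        = ∑ u' : {u : V // u ≠ v},
            ((G.degree (u' : V) : ℝ) - if G.Adj (u' : V) v then 1 else 0) :=
      Finset.sum_congr rfl fun u' _ => by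
        rw [show u' = ⟨u'.1, u'.2⟩ from rfl, sdel_degree G v u'.1 u'.2]
    rw [h2, ← h1, Finset.sum_sub_distrib, hsum2,
      Finset.sum_erase_eq_sub (Finset.mem_univ v)]
    ring
  have hhandG : ∑ u, (G.degree u : ℝ) = 2 * (G.edgeFinset.card : ℝ) := by
    rw [show ∑ u, ((G.degree u : ℕ) : ℝ) = ((∑ u, G.degree u : ℕ) : ℝ) by push_cast; ring,
      SimpleGraph.sum_degrees_eq_twice_card_edges]
    push_cast; ring
  have hhandG' : ∑ u' : {u : V // u ≠ v}, (((sdel G v).degree u' : ℕ) : ℝ)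
      = 2 * (((sdel G v).edgeFinset.card : ℕ) : ℝ) := by
    rw [show ∑ u' : {u : V // u ≠ v}, (((sdel G v).degree u' : ℕ) : ℝ)
        = ((∑ u' : {u : V // u ≠ v}, (sdel G v).degree u' : ℕ) : ℝ) by push_cast; ring,
      SimpleGraph.sum_degrees_eq_twice_card_edges]
    push_cast; ring
  rw [hhandG, hhandG'] at hdegsum
  linarith

end Delete

end MooreAux

open MooreAux in
/-- Main auxiliary statement, proven by strong induction on the number of vertices. -/
theorem moore_aux : ∀ (n : ℕ) (V : Type*) [Fintype V] [DecidableEq V] [Nonempty V]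
    (G : SimpleGraph V) [DecidableRel G.Adj] (k : ℕ), 1 ≤ k →
    (∀ (a : V) (c : G.Walk a a), c.IsCycle → 2*k + 1 ≤ c.length) → Fintype.card V = n →
    (G.edgeFinset.card : ℝ) < (Fintype.card V : ℝ) ^ ((1 : ℝ) + 1 / (k : ℝ)) := by
  intro n
  induction n using Nat.strong_induction_on with
  | _ n ih =>
  intro V _ _ _ G _ k hk hbig hcard
  have hn1 : 1 ≤ Fintype.card V := Fintype.card_pos
  by_cases hone : Fintype.card V = 1
  · -- one vertex: no edges
    have hzero : G.edgeFinset.card = 0 := by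
      have h2 : ∑ u, G.degree u = 2 * G.edgeFinset.card := G.sum_degrees_eq_twice_card_edges
      have h3 : ∀ u, G.degree u = 0 := fun u => by
        have := G.degree_lt_card_verts u; omega
      rw [Finset.sum_congr rfl (fun u _ => h3 u), Finset.sum_const_zero] at h2
      omega
    rw [hzero, hone]
    simp [Real.one_rpow]
  · by_cases hlow : ∃ v : V, (G.degree v : ℝ) ≤ (Fintype.card V : ℝ) ^ ((1:ℝ)/(k:ℝ))
    · -- Case 1: delete a low-degree vertex and use induction
      obtain ⟨v, hv⟩ := hlow
      have hcard' : Fintype.card {u : V // u ≠ v} = Fintype.card V - 1 := sdel_card v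
      have hn2 : 2 ≤ Fintype.card V := by omega
      haveI hne' : Nonempty {u : V // u ≠ v} := by
        rw [← Fintype.card_pos_iff, hcard']
        omega
      have hbig' := sdel_cycles G v k hbig
      have hm' := sdel_edges G v
      have hIH := ih (Fintype.card V - 1) (by omega) {u : V // u ≠ v} (sdel G v) k hk hbig'
        (by rw [hcard'])
      -- final arithmetic
      set nR : ℝ := (Fintype.card V : ℝ) with hnR
      have hnR2 : (2:ℝ) ≤ nR := by rw [hnR]; exact_mod_cast hn2
      have hcV' : ((Fintype.card {u : V // u ≠ v} : ℕ) : ℝ) = nR - 1 := by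
        rw [hcard', hnR]
        push_cast [Nat.cast_sub hn1]
        ring
      rw [hcV'] at hIH
      set x : ℝ := nR ^ ((1:ℝ)/(k:ℝ)) with hx
      have hx0 : (0:ℝ) < x := Real.rpow_pos_of_pos (by linarith) _
      have hsub1 : (1:ℝ) ≤ nR - 1 := by linarith
      have hr1 : (nR - 1) ^ ((1:ℝ) + 1/(k:ℝ)) = (nR - 1) * (nR - 1) ^ ((1:ℝ)/(k:ℝ)) := by
        rw [Real.rpow_add (by linarith), Real.rpow_one]
      have hr2 : (nR - 1) ^ ((1:ℝ)/(k:ℝ)) ≤ x := by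
        rw [hx]
        exact Real.rpow_le_rpow (by linarith) (by linarith) (by positivity)
      have hr3 : nR ^ ((1:ℝ) + 1/(k:ℝ)) = nR * x := by
        rw [Real.rpow_add (by linarith), Real.rpow_one, hx]
      rw [hr3]
      have h5 : (G.edgeFinset.card : ℝ) = (((sdel G v).edgeFinset.card : ℕ) : ℝ)
          + (G.degree v : ℝ) := by rw [hm']; ring
      rw [h5]
      calc (((sdel G v).edgeFinset.card : ℕ) : ℝ) + (G.degree v : ℝ)
          < (nR - 1) ^ ((1:ℝ) + 1/(k:ℝ)) + x := add_lt_add_of_lt_of_le hIH hv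
        _ ≤ (nR - 1) * x + x := by
            rw [hr1]
            have := mul_le_mul_of_nonneg_left hr2 (by linarith : (0:ℝ) ≤ nR - 1)
            linarith
        _ = nR * x := by ring
    · -- Case 2
      push_neg at hlow
      exact case2 convexOn_mul_log_sub_one k hk hbig hlow

/-- A finite simple graph of girth at least `2k+1` (every cycle has
length ≥ 2k+1) has fewer than `n^{1+1/k}` edges. -/
theorem moore_bound_edges {V : Type*} [Fintype V] [Nonempty V] [DecidableEq V]
    (G : SimpleGraph V) [DecidableRel G.Adj] (k : ℕ) (hk : 1 ≤ k)
    (hgirth : (2 * k + 1 : ℕ∞) ≤ G.girth) :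
    (G.edgeFinset.card : ℝ) < (Fintype.card V : ℝ) ^ ((1 : ℝ) + 1 / (k : ℝ)) := by
  have hbig : ∀ (a : V) (c : G.Walk a a), c.IsCycle → 2*k + 1 ≤ c.length := by
    intro a c hc
    have hnotacyc : ¬ G.IsAcyclic := fun h => h c hc
    have hne : G.egirth ≠ ⊤ := by
      rw [ne_eq, SimpleGraph.egirth_eq_top]; exact hnotacyc
    have h1 : (G.girth : ℕ∞) = G.egirth := ENat.coe_toNat hne
    have h2 : ((2*k+1 : ℕ) : ℕ∞) ≤ G.egirth := by
      rw [← h1]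
      exact_mod_cast hgirth
    have h3 : ((2*k+1 : ℕ) : ℕ∞) ≤ (c.length : ℕ∞) :=
      le_trans h2 (SimpleGraph.le_egirth.mp le_rfl a c hc)
    exact_mod_cast h3
  exact moore_aux (Fintype.card V) V G k hk hbig rfl
end

section
/- Consider the algorithm that processes the edges of a weighted graph G in non-decreasing order of weight, adding edge uv to H only if every u-v path in the current H has more than 2k-1 edges. Then for every edge uv of G there is a path in the final H between u and v with at most 2k-1 edges and total weight at most (2k-1)·ω(uv). -/
/-- The cost of a walk: sum of the weights of its edges. -/
def wcost {V : Type*} {G : SimpleGraph V} {x y : V} (ω : Sym2 V → ℝ) (p : G.Walk x y) : ℝ :=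
  (p.edges.map ω).sum

open Classical in
/-- The greedy "dual Kruskal" algorithm: process a list of candidate edges, adding an
edge `(u,v)` to the current graph `H` only if every `u`-`v` path in `H` has more than
`2k-1` edges (equivalently, there is no `u`-`v` walk of length ≤ 2k-1). -/
noncomputable def greedyHop {V : Type*} (k : ℕ) : List (V × V) → SimpleGraph V → SimpleGraph V
  | [], H => H
  | e :: rest, H =>
      greedyHop k rest
        (if ∃ p : H.Walk e.1 e.2, p.length ≤ 2 * k - 1 then H
         else H ⊔ SimpleGraph.fromEdgeSet {s(e.1, e.2)})

open SimpleGraph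

lemma le_greedyHop {V : Type*} (k : ℕ) :
    ∀ (L : List (V × V)) (H : SimpleGraph V), H ≤ greedyHop k L H
  | [], H => le_refl _
  | e :: rest, H => by
    rw [greedyHop]
    split
    · exact le_greedyHop k rest H
    · exact le_trans le_sup_left (le_greedyHop k rest _)

lemma greedyHop_main {V : Type*} (k : ℕ) (hk : 1 ≤ k) (ω : Sym2 V → ℝ) :
    ∀ (L : List (V × V)) (H : SimpleGraph V),
      L.Pairwise (fun a b => ω s(a.1, a.2) ≤ ω s(b.1, b.2)) →
      (∀ e ∈ L, e.1 ≠ e.2) →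
      (∀ f ∈ H.edgeSet, ∀ a ∈ L, ω f ≤ ω s(a.1, a.2)) →
      ∀ e ∈ L, ∃ p : (greedyHop k L H).Walk e.1 e.2,
        p.length ≤ 2 * k - 1 ∧ ∀ f ∈ p.edges, ω f ≤ ω s(e.1, e.2)
  | [], H => by intro _ _ _ e he; cases he
  | a :: rest, H => by
    intro hpair hne hbound e he
    rw [List.mem_cons] at he
    rw [greedyHop]
    by_cases hex : ∃ p : H.Walk a.1 a.2, p.length ≤ 2 * k - 1
    · rw [if_pos hex]
      rcases he with he | he
      · subst he
        obtain ⟨p, hp⟩ := hex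
        have hsub : ∀ f ∈ p.edges, f ∈ (greedyHop k rest H).edgeSet := fun f hf =>
          edgeSet_mono (le_greedyHop k rest H) (p.edges_subset_edgeSet hf)
        refine ⟨p.transfer _ hsub, ?_, ?_⟩
        · simpa using hp
        · intro f hf
          rw [Walk.edges_transfer] at hf
          exact hbound f (p.edges_subset_edgeSet hf) e List.mem_cons_self
      · exact greedyHop_main k hk ω rest H hpair.of_cons
          (fun x hx => hne x (List.mem_cons_of_mem _ hx))
          (fun f hf x hx => hbound f hf x (List.mem_cons_of_mem _ hx)) e he
    · rw [if_neg hex]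
      set H' := H ⊔ fromEdgeSet {s(a.1, a.2)} with hH'
      have hadj' : H'.Adj a.1 a.2 := by
        apply Or.inr
        rw [fromEdgeSet_adj]
        exact ⟨rfl, hne a List.mem_cons_self⟩
      rcases he with he | he
      · subst he
        let p : H'.Walk e.1 e.2 := Walk.cons hadj' Walk.nil
        have hsub : ∀ f ∈ p.edges, f ∈ (greedyHop k rest H').edgeSet := fun f hf =>
          edgeSet_mono (le_greedyHop k rest H') (p.edges_subset_edgeSet hf)
        refine ⟨p.transfer _ hsub, ?_, ?_⟩
        · rw [Walk.length_transfer]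
          show 1 ≤ 2 * k - 1
          omega
        · intro f hf
          rw [Walk.edges_transfer] at hf
          have : f = s(e.1, e.2) := by simpa [p] using hf
          subst this
          exact le_refl _
      · refine greedyHop_main k hk ω rest H' hpair.of_cons
          (fun x hx => hne x (List.mem_cons_of_mem _ hx)) ?_ e he
        intro f hf b hb
        rw [hH', edgeSet_sup] at hf
        rcases hf with hf | hf
        · exact hbound f hf b (List.mem_cons_of_mem _ hb)
        · rw [edgeSet_fromEdgeSet] at hf
          obtain ⟨hf, -⟩ := hf
          rw [Set.mem_singleton_iff] at hf
          subst hf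
          exact List.rel_of_pairwise_cons hpair hb


/-- After running the greedy algorithm on the edges of `G` in
non-decreasing order of weight, every edge `uv` of `G` is covered by a path in the final
graph with at most `2k-1` edges and total weight at most `(2k-1)·ω(uv)`. -/
theorem greedyHop_stretch {V : Type*} [Fintype V] (G : SimpleGraph V) (ω : Sym2 V → ℝ)
    (hω : ∀ e ∈ G.edgeSet, 0 < ω e) (k : ℕ) (hk : 1 ≤ k)
    (L : List (V × V))
    (hadj : ∀ e ∈ L, G.Adj e.1 e.2)
    (hall : ∀ u v : V, G.Adj u v → (u, v) ∈ L ∨ (v, u) ∈ L)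
    (hsorted : L.Pairwise fun a b => ω s(a.1, a.2) ≤ ω s(b.1, b.2)) :
    ∀ u v : V, G.Adj u v →
      ∃ p : (greedyHop k L ⊥).Walk u v, p.IsPath ∧ p.length ≤ 2 * k - 1 ∧
        wcost ω p ≤ (2 * (k : ℝ) - 1) * ω s(u, v) := by
  intro u v huv
  classical
  have hne : ∀ e ∈ L, e.1 ≠ e.2 := fun e he => (hadj e he).ne
  have hbound : ∀ f ∈ (⊥ : SimpleGraph V).edgeSet, ∀ a ∈ L, ω f ≤ ω s(a.1, a.2) := by
    simp
  have main := greedyHop_main k hk ω L ⊥ hsorted hne hbound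
  have key : ∃ p : (greedyHop k L ⊥).Walk u v,
      p.length ≤ 2 * k - 1 ∧ ∀ f ∈ p.edges, ω f ≤ ω s(u, v) := by
    rcases hall u v huv with h | h
    · exact main (u, v) h
    · obtain ⟨p, hlen, hb⟩ := main (v, u) h
      refine ⟨p.reverse, by simpa using hlen, ?_⟩
      intro f hf
      rw [Walk.edges_reverse, List.mem_reverse] at hf
      rw [Sym2.eq_swap]
      exact hb f hf
  obtain ⟨p, hlen, hb⟩ := key
  refine ⟨p.bypass, p.bypass_isPath, le_trans p.length_bypass_le hlen, ?_⟩
  have hb' : ∀ f ∈ p.bypass.edges, ω f ≤ ω s(u, v) := fun f hf =>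
    hb f (p.edges_bypass_subset hf)
  have hlen' : p.bypass.length ≤ 2 * k - 1 := le_trans p.length_bypass_le hlen
  have hW : 0 < ω s(u, v) := hω _ (by rwa [mem_edgeSet])
  have hsum : (p.bypass.edges.map ω).sum ≤ (p.bypass.edges.map ω).length • ω s(u, v) := by
    apply List.sum_le_card_nsmul
    intro x hx
    obtain ⟨f, hf, rfl⟩ := List.mem_map.mp hx
    exact hb' f hf
  rw [wcost]
  refine le_trans hsum ?_
  rw [List.length_map, Walk.length_edges, nsmul_eq_mul]
  apply mul_le_mul_of_nonneg_right _ hW.le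
  have : (2 * k - 1 : ℕ) = 2 * k - 1 := rfl
  calc (p.bypass.length : ℝ) ≤ ((2 * k - 1 : ℕ) : ℝ) := by exact_mod_cast hlen'
    _ = 2 * (k : ℝ) - 1 := by
        rw [Nat.cast_sub (by omega)]
        push_cast
        ring
end

section
/- If u and v are two non-adjacent vertices of a finite graph P and for every set S of at most p-1 vertices of P (excluding u and v) there exists a u-v path in P avoiding S, then P contains p pairwise internally vertex-disjoint paths between u and v. -/
open List
set_option linter.unusedSectionVars false

theorem chain'_nil {α : Type*} {R : α → α → Prop} : Chain' R [] := isChain_nil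
theorem chain'_singleton {α : Type*} {R : α → α → Prop} (a : α) : Chain' R [a] :=
  isChain_singleton a
theorem chain'_cons {α : Type*} {R : α → α → Prop} {a b : α} {l : List α} :
    Chain' R (a :: b :: l) ↔ R a b ∧ Chain' R (b :: l) := isChain_cons_cons
theorem chain'_cons' {α : Type*} {R : α → α → Prop} {x : α} {l : List α} :
    Chain' R (x :: l) ↔ (∀ y ∈ head? l, R x y) ∧ Chain' R l := isChain_cons
theorem chain'_append {α : Type*} {R : α → α → Prop} {l₁ l₂ : List α} :
    Chain' R (l₁ ++ l₂) ↔ Chain' R l₁ ∧ Chain' R l₂ ∧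
      ∀ x ∈ l₁.getLast?, ∀ y ∈ l₂.head?, R x y := isChain_append

section MengerAux


variable {V : Type*} [DecidableEq V]

/-- Prefix of `l` up to (and including) the first element in `s`. -/
def firstCut (s : Finset V) : List V → List V
  | [] => []
  | a :: t => if a ∈ s then [a] else a :: firstCut s t

/-- Suffix of `l` from (and including) the last element in `s`. -/
def lastCut (s : Finset V) : List V → List V
  | [] => []
  | a :: t => if ∃ x ∈ t, x ∈ s then lastCut s t else a :: t

lemma firstCut_prefix (s : Finset V) : ∀ l : List V, firstCut s l <+: l := by
  intro l; induction l with
  | nil => simp [firstCut]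
  | cons a t ih =>
    by_cases h : a ∈ s
    · simp [firstCut, h]
    · simpa [firstCut, h] using ih

lemma lastCut_suffix (s : Finset V) : ∀ l : List V, lastCut s l <:+ l := by
  intro l; induction l with
  | nil => simp [lastCut]
  | cons a t ih =>
    by_cases h : ∃ x ∈ t, x ∈ s
    · simp only [lastCut, if_pos h]
      exact ih.trans (suffix_cons a t)
    · simp [lastCut, if_neg h]

lemma firstCut_ne_nil {s : Finset V} {l : List V} (h : ∃ x ∈ l, x ∈ s) :
    firstCut s l ≠ [] := by
  induction l with
  | nil => simp at h
  | cons a t ih =>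
    by_cases ha : a ∈ s
    · simp [firstCut, ha]
    · have : ∃ x ∈ t, x ∈ s := by
        rcases h with ⟨x, hx, hxs⟩
        rcases mem_cons.1 hx with rfl | hx
        · exact absurd hxs ha
        · exact ⟨x, hx, hxs⟩
      simp [firstCut, ha, ih this]

lemma lastCut_ne_nil {s : Finset V} {l : List V} (h : ∃ x ∈ l, x ∈ s) :
    lastCut s l ≠ [] := by
  induction l with
  | nil => simp at h
  | cons a t ih =>
    by_cases ht : ∃ x ∈ t, x ∈ s
    · simp only [lastCut, if_pos ht]; exact ih ht
    · simp [lastCut, if_neg ht]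

lemma head_firstCut {s : Finset V} {l : List V} (hl : l ≠ []) (h : firstCut s l ≠ []) :
    (firstCut s l).head h = l.head hl := by
  cases l with
  | nil => simp at hl
  | cons a t =>
    by_cases ha : a ∈ s <;> simp [firstCut, ha]

lemma getLast_lastCut {s : Finset V} {l : List V} (hl : l ≠ []) (h : lastCut s l ≠ []) :
    (lastCut s l).getLast h = l.getLast hl := by
  have h1 : l.getLast? = (lastCut s l).getLast? := by
    rcases lastCut_suffix s l with ⟨r, hr⟩
    conv_lhs => rw [← hr]
    exact getLast?_append_of_ne_nil _ h
  rw [getLast?_eq_getLast hl, getLast?_eq_getLast h] at h1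
  exact (Option.some_injective _ h1).symm

lemma getLast_firstCut_mem {s : Finset V} {l : List V} (h : ∃ x ∈ l, x ∈ s)
    (h' : firstCut s l ≠ []) : (firstCut s l).getLast h' ∈ s := by
  induction l with
  | nil => simp at h
  | cons a t ih =>
    by_cases ha : a ∈ s
    · simp [firstCut, ha]
    · have ht : ∃ x ∈ t, x ∈ s := by
        rcases h with ⟨x, hx, hxs⟩
        rcases mem_cons.1 hx with rfl | hx
        · exact absurd hxs ha
        · exact ⟨x, hx, hxs⟩
      have hne := firstCut_ne_nil (s := s) ht
      have : firstCut s (a :: t) = a :: firstCut s t := by simp [firstCut, ha]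
      rw [getLast_congr _ (cons_ne_nil _ _) this, getLast_cons hne]
      exact ih ht hne

lemma head_lastCut_mem {s : Finset V} {l : List V} (h : ∃ x ∈ l, x ∈ s)
    (h' : lastCut s l ≠ []) : (lastCut s l).head h' ∈ s := by
  induction l with
  | nil => simp at h
  | cons a t ih =>
    by_cases ht : ∃ x ∈ t, x ∈ s
    · have hne := lastCut_ne_nil (s := s) ht
      simp only [lastCut, if_pos ht]
      exact ih ht hne
    · have ha : a ∈ s := by
        rcases h with ⟨x, hx, hxs⟩
        rcases mem_cons.1 hx with rfl | hx
        · exact hxs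
        · exact absurd ⟨x, hx, hxs⟩ ht
      simp [lastCut, if_neg ht, ha]

lemma dropLast_firstCut_not_mem {s : Finset V} {l : List V} :
    ∀ x ∈ (firstCut s l).dropLast, x ∉ s := by
  induction l with
  | nil => simp [firstCut]
  | cons a t ih =>
    by_cases ha : a ∈ s
    · simp [firstCut, ha]
    · intro x hx
      simp only [firstCut, if_neg ha] at hx
      rcases eq_or_ne (firstCut s t) [] with hnil | hnil
      · simp [hnil] at hx
      · rw [dropLast_cons_of_ne_nil hnil] at hx
        rcases mem_cons.1 hx with rfl | hx
        · exact ha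
        · exact ih x hx

lemma tail_lastCut_not_mem {s : Finset V} {l : List V} :
    ∀ x ∈ (lastCut s l).tail, x ∉ s := by
  induction l with
  | nil => simp [lastCut]
  | cons a t ih =>
    by_cases ht : ∃ x ∈ t, x ∈ s
    · simpa only [lastCut, if_pos ht] using ih
    · intro x hx hxs
      simp only [lastCut, if_neg ht, tail_cons] at hx
      exact ht ⟨x, hx, hxs⟩

variable {V : Type*} [DecidableEq V]

lemma chain'_strengthen {R D : V → V → Prop} :
    ∀ {l : List V}, Chain' R l → (∀ a b, a ∈ l → b ∈ l → R a b → D a b) → Chain' D l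
  | [], _, _ => chain'_nil
  | [_], _, _ => chain'_singleton _
  | a :: b :: t, h, hs => by
    rw [chain'_cons] at h ⊢
    exact ⟨hs a b (by simp) (by simp) h.1,
      chain'_strengthen h.2 fun c d hc hd => hs c d (by simp [hc]) (by simp [hd])⟩

lemma chain'_restrict_left {R : V → V → Prop} {x y : V} :
    ∀ {l : List V}, Chain' R l → (∀ a ∈ l.dropLast, a ≠ x) →
      Chain' (fun p q => R p q ∧ ¬(p = x ∧ q = y)) l
  | [], _, _ => chain'_nil
  | [_], _, _ => chain'_singleton _
  | a :: b :: t, h, hs => by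
    rw [chain'_cons] at h ⊢
    refine ⟨⟨h.1, fun hc => hs a (by simp) hc.1⟩, chain'_restrict_left h.2 fun c hc => ?_⟩
    exact hs c (by rw [dropLast_cons₂]; exact mem_cons_of_mem _ hc)

lemma chain'_restrict_right {R : V → V → Prop} {x y : V} :
    ∀ {l : List V}, Chain' R l → (∀ b ∈ l.tail, b ≠ y) →
      Chain' (fun p q => R p q ∧ ¬(p = x ∧ q = y)) l
  | [], _, _ => chain'_nil
  | [_], _, _ => chain'_singleton _
  | a :: b :: t, h, hs => by
    rw [chain'_cons] at h ⊢
    refine ⟨⟨h.1, fun hc => hs b (by simp) hc.2⟩, chain'_restrict_right h.2 fun c hc => ?_⟩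
    exact hs c (mem_cons_of_mem _ hc)

lemma chain'_all {D : V → V → Prop} {P : V → Prop} (hD : ∀ a b, D a b → P b) :
    ∀ {l : List V} (hl : l ≠ []), Chain' D l → P (l.head hl) → ∀ z ∈ l, P z
  | [], hl, _, _ => absurd rfl hl
  | [a], _, _, ha => by simpa using ha
  | a :: b :: t, _, h, ha => by
    rw [chain'_cons] at h
    intro z hz
    rcases mem_cons.1 hz with rfl | hz
    · exact ha
    · exact chain'_all hD (cons_ne_nil _ _) h.2 (hD a b h.1) z hz

lemma prefix_eq_of_getLast_mem {l₁ l : List V} (hp : l₁ <+: l) (hnd : l.Nodup)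
    (hl : l ≠ []) (hmem : l.getLast hl ∈ l₁) : l₁ = l := by
  rcases hp with ⟨r, hr⟩
  rcases eq_or_ne r [] with rfl | hr'
  · rw [← hr, append_nil]
  · exfalso
    have h1 : l.getLast hl = r.getLast hr' := by
      have := getLast?_append_of_ne_nil l₁ (l₂ := r) hr'
      rw [hr, getLast?_eq_getLast hl, getLast?_eq_getLast hr'] at this
      exact Option.some_injective _ this
    rw [← hr] at hnd
    exact (disjoint_of_nodup_append hnd) (h1 ▸ hmem) (getLast_mem hr')

lemma suffix_eq_of_head_mem {l₁ l : List V} (hs : l₁ <:+ l) (hnd : l.Nodup)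
    (hl : l ≠ []) (hmem : l.head hl ∈ l₁) : l₁ = l := by
  rcases hs with ⟨r, hr⟩
  rcases eq_or_ne r [] with rfl | hr'
  · rw [← hr, nil_append]
  · exfalso
    have h1 : l.head hl = r.head hr' := by
      have : (r ++ l₁).head? = r.head? := head?_append_of_ne_nil r (l₂ := l₁) hr'
      rw [hr, head?_eq_head hl, head?_eq_head hr'] at this
      exact Option.some_injective _ this
    rw [← hr] at hnd
    exact (disjoint_of_nodup_append hnd) (head_mem hr') (h1 ▸ hmem)

lemma chain'_glue {D : V → V → Prop} {l₁ l₂ : List V} (h₁ : Chain' D l₁)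
    (h₂ : Chain' D l₂) (hne₁ : l₁ ≠ []) (hne₂ : l₂ ≠ [])
    (hj : l₁.getLast hne₁ = l₂.head hne₂) : Chain' D (l₁ ++ l₂.tail) := by
  apply h₁.append h₂.tail
  intro a ha z hz
  rw [getLast?_eq_getLast hne₁, Option.mem_some_iff] at ha
  subst ha
  rw [hj]
  cases l₂ with
  | nil => exact absurd rfl hne₂
  | cons c t =>
    rw [chain'_cons'] at h₂
    simpa using h₂.1 z (by simpa using hz)

lemma glue_getLast {l₁ l₂ : List V} (hne₁ : l₁ ≠ []) (hne₂ : l₂ ≠ [])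
    (hj : l₁.getLast hne₁ = l₂.head hne₂) (h : l₁ ++ l₂.tail ≠ []) :
    (l₁ ++ l₂.tail).getLast h = l₂.getLast hne₂ := by
  rcases eq_or_ne l₂.tail [] with ht | ht
  · obtain ⟨c, rfl⟩ : ∃ c, l₂ = [c] := by
      cases l₂ with
      | nil => exact absurd rfl hne₂
      | cons c t => simp at ht; exact ⟨c, by simp [ht]⟩
    simp only [tail_cons, append_nil, getLast_singleton]
    simpa using hj
  · rw [getLast_append_of_ne_nil _ ht]
    have : l₂.getLast? = l₂.tail.getLast? := by
      cases l₂ with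
      | nil => exact absurd rfl hne₂
      | cons c t =>
        simp only [tail_cons] at ht ⊢
        rw [getLast?_eq_getLast ht, getLast?_eq_getLast (cons_ne_nil c t),
          getLast_cons ht]
    rw [getLast?_eq_getLast hne₂, getLast?_eq_getLast ht] at this
    exact (Option.some_injective _ this).symm

lemma glue_head {l₁ l₂ : List V} (hne₁ : l₁ ≠ []) (h : l₁ ++ l₂ ≠ []) :
    (l₁ ++ l₂).head h = l₁.head hne₁ := head_append_of_ne_nil _

lemma nodup_append_disj {l₁ l₂ : List V} (h : (l₁ ++ l₂).Nodup) :
    ∀ a ∈ l₁, a ∉ l₂ := fun a ha hb => (disjoint_of_nodup_append h) ha hb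

lemma head_congr' {l₁ l₂ : List V} (h : l₁ = l₂) (h₁ : l₁ ≠ []) :
    l₁.head h₁ = l₂.head (h ▸ h₁) := by subst h; rfl

variable {V : Type*} [Fintype V] [DecidableEq V]

def DSep (D : V → V → Prop) (A B S : Finset V) : Prop :=
  ∀ (l : List V) (hl : l ≠ []), l.Chain' D → l.head hl ∈ A → l.getLast hl ∈ B →
    ∃ s ∈ S, s ∈ l

structure WConn (D : V → V → Prop) (A B : Finset V) (k : ℕ) where
  f : Fin k → List V
  ne : ∀ i, f i ≠ []
  ch : ∀ i, (f i).Chain' D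
  nd : ∀ i, (f i).Nodup
  hA : ∀ i, (f i).head (ne i) ∈ A
  hB : ∀ i, (f i).getLast (ne i) ∈ B
  disj : ∀ i j, i ≠ j → ∀ x ∈ f i, x ∉ f j

structure SConn (D : V → V → Prop) (A B : Finset V) (k : ℕ) extends WConn D A B k where
  mA : ∀ i x, x ∈ f i → x ∈ A → x = (f i).head (ne i)
  mB : ∀ i x, x ∈ f i → x ∈ B → x = (f i).getLast (ne i)


lemma wconn_trim {D : V → V → Prop} {A B : Finset V} {k : ℕ} (C : WConn D A B k) :
    Nonempty (SConn D A B k) := by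
  have exA : ∀ i, ∃ x ∈ C.f i, x ∈ A := fun i => ⟨_, head_mem (C.ne i), C.hA i⟩
  set m : Fin k → List V := fun i => lastCut A (C.f i) with hm
  have mne : ∀ i, m i ≠ [] := fun i => lastCut_ne_nil (exA i)
  have msuf : ∀ i, m i <:+ C.f i := fun i => lastCut_suffix A (C.f i)
  have mchain : ∀ i, (m i).Chain' D := fun i => (C.ch i).suffix (msuf i)
  have mnd : ∀ i, (m i).Nodup := fun i => (C.nd i).sublist (msuf i).sublist
  have mheadA : ∀ i, (m i).head (mne i) ∈ A := fun i => head_lastCut_mem (exA i) (mne i)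
  have mlast : ∀ i, (m i).getLast (mne i) = (C.f i).getLast (C.ne i) :=
    fun i => getLast_lastCut (C.ne i) (mne i)
  have mA : ∀ i x, x ∈ m i → x ∈ A → x = (m i).head (mne i) := by
    intro i x hx hxA
    rcases (eq_or_ne x ((m i).head (mne i))) with h | h
    · exact h
    · exfalso
      have : x ∈ (m i).tail := by
        have hht := cons_head_tail (mne i)
        rw [← hht] at hx
        rcases mem_cons.1 hx with h' | h'
        · exact absurd h' h
        · exact h'
      exact tail_lastCut_not_mem x this hxA
  have exB : ∀ i, ∃ x ∈ m i, x ∈ B := by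
    intro i
    refine ⟨(m i).getLast (mne i), getLast_mem _, ?_⟩
    rw [mlast i]; exact C.hB i
  set g : Fin k → List V := fun i => firstCut B (m i) with hg
  have gne : ∀ i, g i ≠ [] := fun i => firstCut_ne_nil (exB i)
  have gpre : ∀ i, g i <+: m i := fun i => firstCut_prefix B (m i)
  have gsub : ∀ i, g i <+ C.f i := fun i => ((gpre i).sublist).trans (msuf i).sublist
  have gmB : ∀ i x, x ∈ g i → x ∈ B → x = (g i).getLast (gne i) := by
    intro i x hx hxB
    have hdecomp := dropLast_append_getLast (gne i)
    rw [← hdecomp] at hx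
    rcases mem_append.1 hx with h' | h'
    · exact absurd hxB (dropLast_firstCut_not_mem x h')
    · simpa using h'
  have gmA : ∀ i x, x ∈ g i → x ∈ A → x = (g i).head (gne i) := by
    intro i x hx hxA
    rw [head_firstCut (mne i) (gne i)]
    exact mA i x ((gpre i).subset hx) hxA
  exact ⟨⟨⟨g, gne, fun i => (mchain i).prefix (gpre i),
    fun i => (mnd i).sublist (gpre i).sublist,
    fun i => by rw [head_firstCut (mne i) (gne i)]; exact mheadA i,
    fun i => getLast_firstCut_mem (exB i) (gne i),
    fun i j hij x hx hx' =>
      C.disj i j hij x ((gsub i).subset hx) ((gsub j).subset hx')⟩, gmA, gmB⟩⟩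

lemma sconn_last_surj {D : V → V → Prop} {A B : Finset V} {k : ℕ}
    (C : SConn D A B k) (hcard : B.card = k) :
    ∀ b ∈ B, ∃ i, (C.f i).getLast (C.ne i) = b := by
  have hinj : Function.Injective
      (fun i : Fin k => (⟨(C.f i).getLast (C.ne i), C.hB i⟩ : B)) := by
    intro i j hij
    by_contra hne
    simp only [Subtype.mk_eq_mk] at hij
    exact C.disj i j hne _ (getLast_mem (C.ne i)) (hij ▸ getLast_mem (C.ne j))
  have hsurj : Function.Surjective
      (fun i : Fin k => (⟨(C.f i).getLast (C.ne i), C.hB i⟩ : B)) := by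
    have hcards : Fintype.card (Fin k) = Fintype.card B := by
      simp [Fintype.card_coe, hcard]
    exact ((Fintype.bijective_iff_injective_and_card _).2 ⟨hinj, hcards⟩).2
  intro b hb
  rcases hsurj ⟨b, hb⟩ with ⟨i, hi⟩
  exact ⟨i, congrArg Subtype.val hi⟩

lemma sconn_head_surj {D : V → V → Prop} {A B : Finset V} {k : ℕ}
    (C : SConn D A B k) (hcard : A.card = k) :
    ∀ a ∈ A, ∃ i, (C.f i).head (C.ne i) = a := by
  have hinj : Function.Injective
      (fun i : Fin k => (⟨(C.f i).head (C.ne i), C.hA i⟩ : A)) := by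
    intro i j hij
    by_contra hne
    simp only [Subtype.mk_eq_mk] at hij
    exact C.disj i j hne _ (head_mem (C.ne i)) (hij ▸ head_mem (C.ne j))
  have hsurj : Function.Surjective
      (fun i : Fin k => (⟨(C.f i).head (C.ne i), C.hA i⟩ : A)) := by
    have hcards : Fintype.card (Fin k) = Fintype.card A := by
      simp [Fintype.card_coe, hcard]
    exact ((Fintype.bijective_iff_injective_and_card _).2 ⟨hinj, hcards⟩).2
  intro a ha
  rcases hsurj ⟨a, ha⟩ with ⟨i, hi⟩
  exact ⟨i, congrArg Subtype.val hi⟩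

lemma wconn_of_no_edges {D : V → V → Prop} {A B : Finset V} {k : ℕ}
    (hD : ∀ a b, ¬ D a b) (hsep : ∀ S, DSep D A B S → k ≤ S.card) :
    Nonempty (WConn D A B k) := by
  have hAB : DSep D A B (A ∩ B) := by
    intro l hl hch hhd hlst
    cases l with
    | nil => exact absurd rfl hl
    | cons a t =>
      cases t with
      | nil =>
        refine ⟨a, ?_, by simp⟩
        simp only [head_cons] at hhd
        simp only [getLast_singleton] at hlst
        exact Finset.mem_inter.2 ⟨hhd, hlst⟩
      | cons b t' => exact absurd (chain'_cons.1 hch).1 (hD a b)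
  have hk : k ≤ (A ∩ B).card := hsep _ hAB
  have hlen : k ≤ (A ∩ B).toList.length := by rwa [Finset.length_toList]
  refine ⟨⟨fun i => [(A ∩ B).toList.get ⟨i, lt_of_lt_of_le i.2 hlen⟩],
    fun i => by simp, fun i => chain'_singleton _, fun i => by simp,
    fun i => ?_, fun i => ?_, ?_⟩⟩
  · have hmem : (A ∩ B).toList.get ⟨i, lt_of_lt_of_le i.2 hlen⟩ ∈ (A ∩ B).toList :=
      get_mem _ _
    rw [Finset.mem_toList] at hmem
    simpa using (Finset.mem_inter.1 hmem).1
  · have hmem : (A ∩ B).toList.get ⟨i, lt_of_lt_of_le i.2 hlen⟩ ∈ (A ∩ B).toList :=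
      get_mem _ _
    rw [Finset.mem_toList] at hmem
    simpa using (Finset.mem_inter.1 hmem).2
  · intro i j hij x hx hx'
    simp only [mem_singleton] at hx hx'
    apply hij
    have hnd := Finset.nodup_toList (A ∩ B)
    have heq := nodup_iff_injective_get.1 hnd (hx.symm.trans hx')
    have h2 : (i : ℕ) = (j : ℕ) := by simpa using heq
    exact Fin.ext h2

noncomputable def ecnt (D : V → V → Prop) : ℕ :=
  (Set.toFinite {p : V × V | D p.1 p.2}).toFinset.card

lemma ecnt_lt {D : V → V → Prop} {x y : V} (hxy : D x y) :
    ecnt (fun a b => D a b ∧ ¬(a = x ∧ b = y)) < ecnt D := by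
  apply Finset.card_lt_card
  constructor
  · intro p hp
    simp only [Set.Finite.mem_toFinset, Set.mem_setOf_eq] at hp ⊢
    exact hp.1
  · intro hsub
    have h2 := hsub (x := (x, y)) (by simp [Set.Finite.mem_toFinset, hxy])
    simp [Set.Finite.mem_toFinset] at h2

theorem dmenger : ∀ (n : ℕ) (D : V → V → Prop) (A B : Finset V) (k : ℕ),
    ecnt D ≤ n → (∀ S, DSep D A B S → k ≤ S.card) → Nonempty (WConn D A B k) := by
  intro n
  induction n with
  | zero =>
    intro D A B k hn hsep
    refine wconn_of_no_edges (fun a b hab => ?_) hsep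
    have : (a, b) ∈ (Set.toFinite {p : V × V | D p.1 p.2}).toFinset := by
      simp [Set.Finite.mem_toFinset, hab]
    have hpos : 0 < ecnt D := Finset.card_pos.2 ⟨_, this⟩
    omega
  | succ n ih =>
    intro D A B k hn hsep
    by_cases hE : ∃ x y, D x y
    case neg =>
      push_neg at hE
      exact wconn_of_no_edges hE hsep
    obtain ⟨x, y, hxy⟩ := hE
    set D' : V → V → Prop := fun a b => D a b ∧ ¬(a = x ∧ b = y) with hD'
    have hecnt : ecnt D' ≤ n := by
      have h2 := ecnt_lt (D := D) hxy
      rw [← hD'] at h2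
      omega
    by_cases hsep' : ∀ S, DSep D' A B S → k ≤ S.card
    case pos =>
      obtain ⟨C⟩ := ih D' A B k hecnt hsep'
      exact ⟨⟨C.f, C.ne, fun i => (C.ch i).imp (fun _ _ hab => hab.1), C.nd,
        C.hA, C.hB, C.disj⟩⟩
    push_neg at hsep'
    obtain ⟨S, hS, hcard⟩ := hsep'
    -- both insert x S and insert y S separate A from B in D
    have sepx : DSep D A B (insert x S) := by
      intro l hl hch hhd hlst
      by_cases hx : x ∈ l
      · exact ⟨x, Finset.mem_insert_self _ _, hx⟩
      · have hch' : l.Chain' D' :=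
          chain'_strengthen hch (fun a b ha _ hab => ⟨hab, fun hc => hx (hc.1 ▸ ha)⟩)
        rcases hS l hl hch' hhd hlst with ⟨s, hs, hsl⟩
        exact ⟨s, Finset.mem_insert_of_mem hs, hsl⟩
    have sepy : DSep D A B (insert y S) := by
      intro l hl hch hhd hlst
      by_cases hy : y ∈ l
      · exact ⟨y, Finset.mem_insert_self _ _, hy⟩
      · have hch' : l.Chain' D' :=
          chain'_strengthen hch (fun a b _ hb hab => ⟨hab, fun hc => hy (hc.2 ▸ hb)⟩)
        rcases hS l hl hch' hhd hlst with ⟨s, hs, hsl⟩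
        exact ⟨s, Finset.mem_insert_of_mem hs, hsl⟩
    have hxS : x ∉ S := by
      intro hxS
      have := hsep _ sepx
      rw [Finset.insert_eq_self.2 hxS] at this
      omega
    have hyS : y ∉ S := by
      intro hyS
      have := hsep _ sepy
      rw [Finset.insert_eq_self.2 hyS] at this
      omega
    have cardx : (insert x S).card = k := by
      have h1 := hsep _ sepx
      rw [Finset.card_insert_of_notMem hxS] at h1 ⊢
      omega
    have cardy : (insert y S).card = k := by
      have h1 := hsep _ sepy
      rw [Finset.card_insert_of_notMem hyS] at h1 ⊢
      omega
    -- every A-(insert x S) separator of D' separates A from B in D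
    have claim1 : ∀ T, DSep D' A (insert x S) T → k ≤ T.card := by
      intro T hT
      apply hsep
      intro l hl hch hhd hlst
      rcases sepx l hl hch hhd hlst with ⟨z, hz, hzl⟩
      have hex : ∃ w ∈ l, w ∈ insert x S := ⟨z, hzl, hz⟩
      have l1ne : firstCut (insert x S) l ≠ [] := firstCut_ne_nil hex
      have l1pre := firstCut_prefix (insert x S) l
      have l1ch : (firstCut (insert x S) l).Chain' D' := by
        apply chain'_restrict_left (hch.prefix l1pre)
        intro a ha
        intro haeq
        exact dropLast_firstCut_not_mem a ha (haeq ▸ Finset.mem_insert_self x S)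
      rcases hT (firstCut (insert x S) l) l1ne l1ch
        (by rw [head_firstCut hl l1ne]; exact hhd)
        (getLast_firstCut_mem hex l1ne) with ⟨t, ht, htl⟩
      exact ⟨t, ht, l1pre.subset htl⟩
    -- every (insert y S)-B separator of D' separates A from B in D
    have claim2 : ∀ T, DSep D' (insert y S) B T → k ≤ T.card := by
      intro T hT
      apply hsep
      intro l hl hch hhd hlst
      rcases sepy l hl hch hhd hlst with ⟨z, hz, hzl⟩
      have hex : ∃ w ∈ l, w ∈ insert y S := ⟨z, hzl, hz⟩
      have l1ne : lastCut (insert y S) l ≠ [] := lastCut_ne_nil hex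
      have l1suf := lastCut_suffix (insert y S) l
      have l1ch : (lastCut (insert y S) l).Chain' D' := by
        apply chain'_restrict_right (hch.suffix l1suf)
        intro b hb hbeq
        exact tail_lastCut_not_mem b hb (hbeq ▸ Finset.mem_insert_self y S)
      rcases hT (lastCut (insert y S) l) l1ne l1ch
        (head_lastCut_mem hex l1ne)
        (by rw [getLast_lastCut hl l1ne]; exact hlst) with ⟨t, ht, htl⟩
      exact ⟨t, ht, l1suf.subset htl⟩
    obtain ⟨C1w⟩ := ih D' A (insert x S) k hecnt claim1
    obtain ⟨C1⟩ := wconn_trim C1w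
    obtain ⟨C2w⟩ := ih D' (insert y S) B k hecnt claim2
    obtain ⟨C2⟩ := wconn_trim C2w
    -- cross-disjointness
    have cross : ∀ i j w, w ∈ C1.f i → w ∈ C2.f j → w ∈ S := by
      intro i j w h1 h2
      by_contra hwS
      have hexP : ∃ z ∈ C1.f i, z ∈ ({w} : Finset V) := ⟨w, h1, by simp⟩
      have hexQ : ∃ z ∈ C2.f j, z ∈ ({w} : Finset V) := ⟨w, h2, by simp⟩
      have p1ne : firstCut {w} (C1.f i) ≠ [] := firstCut_ne_nil hexP
      have q1ne : lastCut {w} (C2.f j) ≠ [] := lastCut_ne_nil hexQ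
      have p1pre := firstCut_prefix ({w} : Finset V) (C1.f i)
      have q1suf := lastCut_suffix ({w} : Finset V) (C2.f j)
      have p1last : (firstCut {w} (C1.f i)).getLast p1ne = w := by
        have := getLast_firstCut_mem hexP p1ne
        simpa using this
      have q1head : (lastCut {w} (C2.f j)).head q1ne = w := by
        have := head_lastCut_mem hexQ q1ne
        simpa using this
      have hjunction : (firstCut {w} (C1.f i)).getLast p1ne =
          (lastCut {w} (C2.f j)).head q1ne := by rw [p1last, q1head]
      have cch : (firstCut {w} (C1.f i) ++ (lastCut {w} (C2.f j)).tail).Chain' D' :=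
        chain'_glue ((C1.ch i).prefix p1pre) ((C2.ch j).suffix q1suf) p1ne q1ne hjunction
      have cne : firstCut {w} (C1.f i) ++ (lastCut {w} (C2.f j)).tail ≠ [] := by
        simp [p1ne]
      rcases hS _ cne cch
        (by rw [glue_head p1ne, head_firstCut (C1.ne i) p1ne]; exact C1.hA i)
        (by rw [glue_getLast p1ne q1ne hjunction,
              getLast_lastCut (C2.ne j) q1ne]; exact C2.hB j) with ⟨s, hs, hsl⟩
      rcases mem_append.1 hsl with hsp | hsq
      · -- s on the P side
        have hsP : s ∈ C1.f i := p1pre.subset hsp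
        have hslast : s = (C1.f i).getLast (C1.ne i) :=
          C1.mB i s hsP (Finset.mem_insert_of_mem hs)
        have hp1eq : firstCut {w} (C1.f i) = C1.f i :=
          prefix_eq_of_getLast_mem p1pre (C1.nd i) (C1.ne i) (hslast ▸ hsp)
        have : w = s := by
          rw [hslast, ← getLast_congr p1ne _ hp1eq, p1last]
        exact hwS (this ▸ hs)
      · -- s on the Q side
        have hsQ : s ∈ C2.f j := q1suf.subset (mem_of_mem_tail hsq)
        have hshead : s = (C2.f j).head (C2.ne j) :=
          C2.mA j s hsQ (Finset.mem_insert_of_mem hs)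
        have hq1eq : lastCut {w} (C2.f j) = C2.f j :=
          suffix_eq_of_head_mem q1suf (C2.nd j) (C2.ne j)
            (hshead ▸ mem_of_mem_tail hsq)
        have : w = s := by
          rw [hshead, ← head_congr' hq1eq q1ne, q1head]
        exact hwS (this ▸ hs)
    have crossB : ∀ i j w, w ∈ C1.f i → w ∈ C2.f j →
        w = (C1.f i).getLast (C1.ne i) ∧ w = (C2.f j).head (C2.ne j) := by
      intro i j w h1 h2
      have hwS := cross i j w h1 h2
      exact ⟨C1.mB i w h1 (Finset.mem_insert_of_mem hwS),
        C2.mA j w h2 (Finset.mem_insert_of_mem hwS)⟩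
    -- matching
    have hτ : ∀ i : Fin k,
        (if (C1.f i).getLast (C1.ne i) = x then y else (C1.f i).getLast (C1.ne i))
          ∈ insert y S := by
      intro i
      by_cases hgx : (C1.f i).getLast (C1.ne i) = x
      · simp [hgx]
      · rw [if_neg hgx]
        have := C1.hB i
        rcases Finset.mem_insert.1 this with h | h
        · exact absurd h hgx
        · exact Finset.mem_insert_of_mem h
    have hj : ∀ i : Fin k, ∃ jj : Fin k, (C2.f jj).head (C2.ne jj) =
        (if (C1.f i).getLast (C1.ne i) = x then y else (C1.f i).getLast (C1.ne i)) :=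
      fun i => sconn_head_surj C2 cardy _ (hτ i)
    choose jf hjf using hj
    have jinj : ∀ i i' : Fin k, i ≠ i' → jf i ≠ jf i' := by
      intro i i' hne heq
      have h1 := hjf i
      have h2 := hjf i'
      rw [heq] at h1
      have heads := h1.symm.trans h2
      by_cases hgx : (C1.f i).getLast (C1.ne i) = x
      · by_cases hgx' : (C1.f i').getLast (C1.ne i') = x
        · exact C1.disj i i' hne _ (getLast_mem (C1.ne i))
            ((hgx.trans hgx'.symm) ▸ getLast_mem (C1.ne i'))
        · rw [if_pos hgx, if_neg hgx'] at heads
          have : (C1.f i').getLast (C1.ne i') ∈ S := by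
            rcases Finset.mem_insert.1 (C1.hB i') with h | h
            · exact absurd h hgx'
            · exact h
          rw [← heads] at this
          exact hyS this
      · by_cases hgx' : (C1.f i').getLast (C1.ne i') = x
        · rw [if_neg hgx, if_pos hgx'] at heads
          have : (C1.f i).getLast (C1.ne i) ∈ S := by
            rcases Finset.mem_insert.1 (C1.hB i) with h | h
            · exact absurd h hgx
            · exact h
          rw [heads] at this
          exact hyS this
        · rw [if_neg hgx, if_neg hgx'] at heads
          exact C1.disj i i' hne _ (getLast_mem (C1.ne i))
            (heads ▸ getLast_mem (C1.ne i'))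

    -- build the glued connector
    classical
    obtain ⟨R, hRx, hRnx⟩ : ∃ R : Fin k → List V,
        (∀ i, ∀ _ : (C1.f i).getLast (C1.ne i) = x,
          R i = C1.f i ++ C2.f (jf i)) ∧
        (∀ i, ∀ _ : (C1.f i).getLast (C1.ne i) ≠ x,
          R i = C1.f i ++ (C2.f (jf i)).tail) :=
      ⟨fun i => if (C1.f i).getLast (C1.ne i) = x then C1.f i ++ C2.f (jf i)
        else C1.f i ++ (C2.f (jf i)).tail,
        fun i h => if_pos h, fun i h => if_neg h⟩
    have Rne : ∀ i, R i ≠ [] := by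
      intro i
      by_cases hgx : (C1.f i).getLast (C1.ne i) = x
      · rw [hRx i hgx]; simp [C1.ne i]
      · rw [hRnx i hgx]; simp [C1.ne i]
    have memR : ∀ i w, w ∈ R i → w ∈ C1.f i ∨ w ∈ C2.f (jf i) := by
      intro i w hw
      by_cases hgx : (C1.f i).getLast (C1.ne i) = x
      · rw [hRx i hgx] at hw
        exact mem_append.1 hw
      · rw [hRnx i hgx] at hw
        rcases mem_append.1 hw with h | h
        · exact Or.inl h
        · exact Or.inr (mem_of_mem_tail h)
    have hjunc : ∀ i, (C1.f i).getLast (C1.ne i) ≠ x →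
        (C1.f i).getLast (C1.ne i) = (C2.f (jf i)).head (C2.ne (jf i)) := by
      intro i hgx
      have := hjf i
      rw [if_neg hgx] at this
      exact this.symm
    have Rch : ∀ i, (R i).Chain' D := by
      intro i
      by_cases hgx : (C1.f i).getLast (C1.ne i) = x
      · rw [hRx i hgx]
        apply ((C1.ch i).imp (fun _ _ hab => hab.1)).append
          ((C2.ch (jf i)).imp (fun _ _ hab => hab.1))
        intro a ha b hb
        rw [getLast?_eq_getLast (C1.ne i), Option.mem_some_iff] at ha
        rw [head?_eq_head (C2.ne (jf i)), Option.mem_some_iff] at hb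
        have hhead := hjf i
        rw [if_pos hgx] at hhead
        rw [← ha, hgx, ← hb, hhead]
        exact hxy
      · rw [hRnx i hgx]
        exact chain'_glue ((C1.ch i).imp (fun _ _ hab => hab.1))
          ((C2.ch (jf i)).imp (fun _ _ hab => hab.1)) (C1.ne i) (C2.ne (jf i))
          (hjunc i hgx)
    have Rnd : ∀ i, (R i).Nodup := by
      intro i
      by_cases hgx : (C1.f i).getLast (C1.ne i) = x
      · rw [hRx i hgx]
        apply (C1.nd i).append (C2.nd (jf i))
        intro w hw hw'
        have := cross i (jf i) w hw hw'
        have hwx := (crossB i (jf i) w hw hw').1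
        rw [hgx] at hwx
        exact hxS (hwx ▸ this)
      · rw [hRnx i hgx]
        apply (C1.nd i).append ((C2.nd (jf i)).sublist (tail_sublist _))
        intro w hw hw'
        have hwQ : w ∈ C2.f (jf i) := mem_of_mem_tail hw'
        have hwhead := (crossB i (jf i) w hw hwQ).2
        have : (C2.f (jf i)).head (C2.ne (jf i)) ∈ (C2.f (jf i)).tail := hwhead ▸ hw'
        have hndQ := C2.nd (jf i)
        rw [← cons_head_tail (C2.ne (jf i))] at hndQ
        exact (nodup_cons.1 hndQ).1 this
    have RhA : ∀ i, (R i).head (Rne i) ∈ A := by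
      intro i
      by_cases hgx : (C1.f i).getLast (C1.ne i) = x
      · rw [head_congr' (hRx i hgx) (Rne i), head_append_of_ne_nil (C1.ne i)]
        exact C1.hA i
      · rw [head_congr' (hRnx i hgx) (Rne i), head_append_of_ne_nil (C1.ne i)]
        exact C1.hA i
    have RhB : ∀ i, (R i).getLast (Rne i) ∈ B := by
      intro i
      by_cases hgx : (C1.f i).getLast (C1.ne i) = x
      · rw [getLast_congr _ _ (hRx i hgx),
          getLast_append_of_ne_nil _ (C2.ne (jf i))]
        · exact C2.hB (jf i)
        · simp [C1.ne i]
      · rw [getLast_congr _ _ (hRnx i hgx),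
          glue_getLast (C1.ne i) (C2.ne (jf i)) (hjunc i hgx)]
        · exact C2.hB (jf i)
        · simp [C1.ne i]
    refine ⟨⟨R, Rne, Rch, Rnd, RhA, RhB, ?_⟩⟩
    intro i i' hne w hw hw'
    rcases memR i w hw with h1 | h1 <;> rcases memR i' w hw' with h2 | h2
    · exact C1.disj i i' hne w h1 h2
    · -- w ∈ C1.f i and w ∈ C2.f (jf i')
      have hcb := crossB i (jf i') w h1 h2
      have hwS := cross i (jf i') w h1 h2
      have hhead := hjf i'
      by_cases hgx' : (C1.f i').getLast (C1.ne i') = x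
      · rw [if_pos hgx'] at hhead
        rw [hhead] at hcb
        exact hyS (hcb.2 ▸ hwS)
      · rw [if_neg hgx'] at hhead
        rw [hhead] at hcb
        exact C1.disj i i' hne w (hcb.1 ▸ getLast_mem (C1.ne i))
          (hcb.2 ▸ getLast_mem (C1.ne i'))
    · -- w ∈ C2.f (jf i) and w ∈ C1.f i'
      have hcb := crossB i' (jf i) w h2 h1
      have hwS := cross i' (jf i) w h2 h1
      have hhead := hjf i
      by_cases hgx : (C1.f i).getLast (C1.ne i) = x
      · rw [if_pos hgx] at hhead
        rw [hhead] at hcb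
        exact hyS (hcb.2 ▸ hwS)
      · rw [if_neg hgx] at hhead
        rw [hhead] at hcb
        exact C1.disj i' i hne.symm w (hcb.1 ▸ getLast_mem (C1.ne i'))
          (hcb.2 ▸ getLast_mem (C1.ne i))
    · exact C2.disj (jf i) (jf i') (jinj i i' hne) w h1 h2

lemma walk_decomp {P : SimpleGraph V} {u v : V} (huv : u ≠ v) (hna : ¬P.Adj u v)
    (q : P.Walk u v) (hq : q.IsPath) :
    ∃ (m : List V) (hm : m ≠ []), q.support = u :: (m ++ [v]) ∧ m.Nodup ∧
      u ∉ m ∧ v ∉ m ∧ Chain' P.Adj m ∧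
      P.Adj u (m.head hm) ∧ P.Adj (m.getLast hm) v := by
  cases q with
  | nil => exact absurd rfl huv
  | @cons _ c _ hadj q' =>
    have tne : q'.support ≠ [] := q'.support_ne_nil
    have tlast : q'.support.getLast tne = v := by
      have := q'.getLast_support
      rwa [getLast_congr _ tne rfl] at this
    have thead : q'.support = c :: q'.support.tail := q'.support_eq_cons
    set m : List V := q'.support.dropLast with hmdef
    have tdecomp : q'.support = m ++ [v] := by
      rw [hmdef]
      conv_lhs => rw [← dropLast_append_getLast tne, tlast]
    have hm : m ≠ [] := by
      intro hnil
      rw [hnil, nil_append] at tdecomp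
      have : c = v := by
        rw [thead] at tdecomp
        exact (cons.injEq .. ▸ tdecomp).1
      exact hna (this ▸ hadj)
    have hsupp : (SimpleGraph.Walk.cons hadj q').support = u :: (m ++ [v]) := by
      rw [SimpleGraph.Walk.support_cons, tdecomp]
    have hnd : (u :: (m ++ [v])).Nodup := by
      rw [← hsupp]
      exact (SimpleGraph.Walk.isPath_def _).1 hq
    have hmnd : m.Nodup := ((nodup_cons.1 hnd).2).sublist (sublist_append_left _ _)
    have humem : u ∉ m := fun hu => (nodup_cons.1 hnd).1 (mem_append_left _ hu)
    have hvmem : v ∉ m := fun hv =>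
      (disjoint_of_nodup_append (nodup_cons.1 hnd).2) hv (by simp)
    have hch : Chain' P.Adj (u :: (m ++ [v])) := by
      rw [← hsupp]
      exact SimpleGraph.Walk.isChain_adj_support _
    have hch2 := chain'_cons'.1 hch
    have hadj1 : P.Adj u (m.head hm) := by
      have hmem : (m ++ [v]).head (by simp) ∈ (m ++ [v]).head? := by
        rw [head?_eq_head (by simp)]
        exact Option.mem_some_iff.2 rfl
      have h2 := hch2.1 _ hmem
      rwa [head_append_of_ne_nil hm] at h2
    have hch3 := chain'_append.1 hch2.2
    have hadj2 : P.Adj (m.getLast hm) v :=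
      hch3.2.2 (m.getLast hm)
        (by rw [getLast?_eq_getLast hm]; exact Option.mem_some_iff.2 rfl)
        v (by simp)
    exact ⟨m, hm, hsupp, hmnd, humem, hvmem, hch3.1, hadj1, hadj2⟩

lemma exists_walk_of_chain (P : SimpleGraph V) :
    ∀ (l : List V) (a b : V), Chain' P.Adj (a :: (l ++ [b])) →
      ∃ w : P.Walk a b, w.support = a :: (l ++ [b])
  | [], a, b, hch => by
    have hab : P.Adj a b := (chain'_cons.1 hch).1
    exact ⟨SimpleGraph.Walk.cons hab SimpleGraph.Walk.nil, by simp⟩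
  | c :: t, a, b, hch => by
    have h1 := chain'_cons.1 (by simpa using hch)
    obtain ⟨w', hw'⟩ := exists_walk_of_chain P t c b h1.2
    exact ⟨SimpleGraph.Walk.cons h1.1 w', by simp [hw']⟩


end MengerAux

/-- Two walks with the same endpoints are internally vertex-disjoint if they share no
vertices besides the endpoints. -/
def InternallyDisjoint {V : Type*} {G : SimpleGraph V} {x y : V}
    (p q : G.Walk x y) : Prop :=
  ∀ z ∈ p.support, z ∈ q.support → z = x ∨ z = y

/-- A family of `p` pairwise internally vertex-disjoint paths (a `p`-multipath). -/
def IsMultipath {V : Type*} {G : SimpleGraph V} {x y : V} {p : ℕ}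
    (P : Fin p → G.Walk x y) : Prop :=
  (∀ i, (P i).IsPath) ∧ ∀ i j, i ≠ j → InternallyDisjoint (P i) (P j)

/-- Menger. If `u` and `v` are non-adjacent and no set of at most
`p-1` vertices (excluding `u,v`) separates them, then there are `p` pairwise internally
vertex-disjoint `u`-`v` paths. -/
theorem menger_vertex {V : Type*} [Fintype V] [DecidableEq V] (P : SimpleGraph V)
    (u v : V) (huv : u ≠ v) (hna : ¬P.Adj u v) (p : ℕ) (hp : 1 ≤ p)
    (h : ∀ S : Finset V, S.card ≤ p - 1 → u ∉ S → v ∉ S →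
      ∃ w : P.Walk u v, ∀ x ∈ w.support, x ∉ S) :
    ∃ Q : Fin p → P.Walk u v, IsMultipath Q := by
  classical
  set D : V → V → Prop := fun a b =>
    P.Adj a b ∧ a ≠ u ∧ a ≠ v ∧ b ≠ u ∧ b ≠ v with hD
  set A : Finset V := (Set.toFinite {a | P.Adj u a}).toFinset with hA
  set B : Finset V := (Set.toFinite {a | P.Adj v a}).toFinset with hB
  have memA : ∀ a, a ∈ A ↔ P.Adj u a := by
    intro a; rw [hA, Set.Finite.mem_toFinset, Set.mem_setOf_eq]
  have memB : ∀ a, a ∈ B ↔ P.Adj v a := by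
    intro a; rw [hB, Set.Finite.mem_toFinset, Set.mem_setOf_eq]
  have hAuv : ∀ a ∈ A, a ≠ u ∧ a ≠ v := by
    intro a ha
    rw [memA] at ha
    exact ⟨fun hu => P.irrefl (hu ▸ ha), fun hv => hna (hv ▸ ha)⟩
  -- the separation hypothesis for the directed auxiliary graph
  have hsep : ∀ S, DSep D A B S → p ≤ S.card := by
    intro S hDS
    by_contra hlt
    push_neg at hlt
    set S' : Finset V := (S.erase u).erase v with hS'
    have hS'sub : S' ⊆ S := (Finset.erase_subset _ _).trans (Finset.erase_subset _ _)
    have hS'card : S'.card ≤ p - 1 := by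
      have h1 : S'.card ≤ S.card := Finset.card_le_card hS'sub
      omega
    have huS' : u ∉ S' := fun hu =>
      absurd rfl (Finset.mem_erase.1 (Finset.mem_of_mem_erase hu)).1
    have hvS' : v ∉ S' := Finset.notMem_erase _ _
    obtain ⟨w, hw⟩ := h S' hS'card huS' hvS'
    obtain ⟨m, hm, hsupp, hmnd, hum, hvm, hmch, ha1, ha2⟩ :=
      walk_decomp huv hna w.bypass w.bypass_isPath
    have hmsub : ∀ z ∈ m, z ∈ w.support := by
      intro z hz
      apply w.support_bypass_subset
      rw [hsupp]
      exact mem_cons_of_mem _ (mem_append_left _ hz)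
    have hmD : Chain' D m := by
      apply chain'_strengthen hmch
      intro a b haM hbM hab
      exact ⟨hab, fun hx => hum (hx ▸ haM), fun hx => hvm (hx ▸ haM),
        fun hx => hum (hx ▸ hbM), fun hx => hvm (hx ▸ hbM)⟩
    rcases hDS m hm hmD ((memA _).2 ha1) ((memB _).2 ha2.symm) with ⟨s, hsS, hsm⟩
    have hsS' : s ∈ S' := by
      rw [hS', Finset.mem_erase, Finset.mem_erase]
      exact ⟨fun hx => hvm (hx ▸ hsm), fun hx => hum (hx ▸ hsm), hsS⟩
    exact hw s (hmsub s hsm) hsS'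
  obtain ⟨C⟩ := dmenger (ecnt D) D A B p le_rfl hsep
  have hCuv : ∀ i, ∀ z ∈ C.f i, z ≠ u ∧ z ≠ v := by
    intro i
    exact chain'_all (P := fun z => z ≠ u ∧ z ≠ v)
      (fun a b hab => ⟨hab.2.2.2.1, hab.2.2.2.2⟩) (C.ne i) (C.ch i)
      (hAuv _ (C.hA i))
  have hchain : ∀ i, Chain' P.Adj (u :: (C.f i ++ [v])) := by
    intro i
    apply chain'_cons'.2
    constructor
    · intro y hy
      rw [head?_append_of_ne_nil _ (C.ne i), head?_eq_head (C.ne i)] at hy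
      rw [Option.mem_some_iff] at hy
      subst hy
      exact (memA _).1 (C.hA i)
    · apply chain'_append.2
      refine ⟨(C.ch i).imp (fun _ _ hab => hab.1), chain'_singleton _, ?_⟩
      intro a ha b hb
      rw [getLast?_eq_getLast (C.ne i), Option.mem_some_iff] at ha
      simp only [head?_cons, Option.mem_some_iff] at hb
      subst ha; subst hb
      exact ((memB _).1 (C.hB i)).symm
  have hex : ∀ i, ∃ w : P.Walk u v, w.support = u :: (C.f i ++ [v]) :=
    fun i => exists_walk_of_chain P (C.f i) u v (hchain i)
  choose Q hQ using hex
  refine ⟨Q, fun i => ?_, fun i j hij => ?_⟩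
  · rw [SimpleGraph.Walk.isPath_def, hQ i]
    refine nodup_cons.2 ⟨?_, ?_⟩
    · intro hu
      rcases mem_append.1 hu with h' | h'
      · exact (hCuv i u h').1 rfl
      · exact huv (by simpa using h')
    · refine nodup_append.2 ⟨C.nd i, nodup_singleton _, ?_⟩
      intro z hz b hz' hzb
      have : z = v := by simpa [hzb] using hz'
      exact (hCuv i z hz).2 this
  · intro z hz hz'
    rw [hQ i] at hz
    rw [hQ j] at hz'
    rcases mem_cons.1 hz with rfl | hz2
    · exact Or.inl rfl
    rcases mem_append.1 hz2 with hzm | hzv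
    · rcases mem_cons.1 hz' with rfl | hz2'
      · exact absurd rfl (hCuv i z hzm).1
      rcases mem_append.1 hz2' with hzm' | hzv'
      · exact absurd hzm' (C.disj i j hij z hzm)
      · exact Or.inr (by simpa using hzv')
    · exact Or.inr (by simpa using hzv)
end

section
/- Let T be a subgraph of a graph G, uv an edge contained in T, and a, b two vertices of T distinct from u and v, such that T contains an elementary cycle through uv and a of cost δ²_T(uv,a) and an elementary cycle through uv and b of cost δ²_T(uv,b). Then G contains two internally vertex-disjoint a-b paths whose total cost is at most δ²_T(uv,a) + δ²_T(uv,b) − ω(uv), i.e., δ²_G(a,b) ≤ δ²_T(uv,a) + δ²_T(uv,b) − ω(uv). -/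
section Aux

open SimpleGraph Walk

variable {V : Type*} [DecidableEq V] {G : SimpleGraph V} {ω : Sym2 V → ℝ}

lemma wcost_append {x y z : V} (p : G.Walk x y) (q : G.Walk y z) :
    wcost ω (p.append q) = wcost ω p + wcost ω q := by
  simp [wcost, Walk.edges_append]

lemma wcost_reverse {x y : V} (p : G.Walk x y) : wcost ω p.reverse = wcost ω p := by
  simp [wcost, Walk.edges_reverse, List.sum_reverse]

lemma wcost_cons {x y z : V} (h : G.Adj x y) (p : G.Walk y z) :
    wcost ω (Walk.cons h p) = ω s(x, y) + wcost ω p := by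
  simp [wcost]

lemma wcost_nonneg (hω : ∀ e ∈ G.edgeSet, 0 ≤ ω e) {x y : V} (p : G.Walk x y) :
    0 ≤ wcost ω p := by
  apply List.sum_nonneg
  intro r hr
  obtain ⟨e, he, rfl⟩ := List.mem_map.mp hr
  exact hω e (p.edges_subset_edgeSet he)

lemma edge_le_wcost (hω : ∀ e ∈ G.edgeSet, 0 ≤ ω e) {x y : V} (p : G.Walk x y)
    {e : Sym2 V} (he : e ∈ p.edges) : ω e ≤ wcost ω p := by
  apply List.single_le_sum (l := p.edges.map ω)
  · intro r hr
    obtain ⟨e', he', rfl⟩ := List.mem_map.mp hr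
    exact hω e' (p.edges_subset_edgeSet he')
  · exact List.mem_map_of_mem (f := ω) he

lemma path_split {s t x : V} (p : G.Walk s t) (hp : p.IsPath) (h : x ∈ p.support) :
    ∀ z, z ∈ (p.takeUntil x h).support → z ∈ (p.dropUntil x h).support → z = x := by
  intro z h1 h2
  have hs : p.support = (p.takeUntil x h).support ++ (p.dropUntil x h).support.tail := by
    rw [← Walk.support_append, Walk.take_spec]
  have hnd := hp.support_nodup
  rw [hs, List.nodup_append] at hnd
  by_contra hzx
  have h2' : z ∈ (p.dropUntil x h).support.tail := by
    rw [(p.dropUntil x h).support_eq_cons] at h2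
    exact (List.mem_cons.mp h2).resolve_left hzx
  exact hnd.2.2 _ h1 _ h2' rfl

lemma cycle_split {s t : V} (c : G.Walk s s) (hc : c.IsCycle) (ht : t ∈ c.support)
    (hts : t ≠ s) :
    (c.takeUntil t ht).IsPath ∧ (c.dropUntil t ht).IsPath ∧
      ∀ z, z ∈ (c.takeUntil t ht).support → z ∈ (c.dropUntil t ht).support →
        z = s ∨ z = t := by
  set P := c.takeUntil t ht with hPdef
  set Q := c.dropUntil t ht with hQdef
  have hsup : P.support ++ Q.support.tail = c.support := by
    rw [← Walk.support_append, Walk.take_spec]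
  have hc1 : c.support = s :: (P.support.tail ++ Q.support.tail) := by
    rw [← hsup, P.support_eq_cons]
    rfl
  have hnd : (P.support.tail ++ Q.support.tail).Nodup := by
    have h2 := hc.support_nodup
    rw [hc1] at h2
    simpa using h2
  rw [List.nodup_append] at hnd
  obtain ⟨ndP, ndQ, disj⟩ := hnd
  have hsQ : s ∈ Q.support.tail := by
    have h1 : s ∈ Q.support := Q.end_mem_support
    rw [Q.support_eq_cons] at h1
    exact (List.mem_cons.mp h1).resolve_left (fun h => hts h.symm)
  have hsP : s ∉ P.support.tail := fun hs => disj _ hs _ hsQ rfl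
  have hPpath : P.IsPath := by
    apply Walk.IsPath.mk'
    rw [P.support_eq_cons]
    exact List.nodup_cons.mpr ⟨hsP, ndP⟩
  have htP : t ∈ P.support.tail := by
    have h1 : t ∈ P.support := P.end_mem_support
    rw [P.support_eq_cons] at h1
    exact (List.mem_cons.mp h1).resolve_left hts
  have htQ : t ∉ Q.support.tail := fun h' => disj _ htP _ h' rfl
  have hQpath : Q.IsPath := by
    apply Walk.IsPath.mk'
    rw [Q.support_eq_cons]
    exact List.nodup_cons.mpr ⟨htQ, ndQ⟩
  refine ⟨hPpath, hQpath, ?_⟩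
  intro z h1 h2
  by_contra hcon
  push_neg at hcon
  obtain ⟨hzs, hzt⟩ := hcon
  rw [P.support_eq_cons] at h1
  rw [Q.support_eq_cons] at h2
  exact disj _ ((List.mem_cons.mp h1).resolve_left hzs) _ ((List.mem_cons.mp h2).resolve_left hzt) rfl

lemma edge_at_start {s t d : V} (p : G.Walk s t) (hp : p.IsPath) (he : s(s, d) ∈ p.edges) :
    ∃ (h : G.Adj s d) (q : G.Walk d t), p = Walk.cons h q := by
  cases p with
  | nil => simp at he
  | @cons _ w _ h' q' =>
    rw [Walk.edges_cons, List.mem_cons] at he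
    rcases he with he | he
    · obtain rfl : d = w := Sym2.congr_right.mp he
      exact ⟨h', q', rfl⟩
    · exfalso
      have hs : s ∈ q'.support := q'.fst_mem_support_of_mem_edges he
      have hnd := hp.support_nodup
      rw [Walk.support_cons] at hnd
      exact (List.nodup_cons.mp hnd).1 hs

lemma cycle_cons_of_edge {u v : V} (ω : Sym2 V → ℝ) (c : G.Walk u u) (hc : c.IsCycle)
    (he : s(u, v) ∈ c.edges) :
    ∃ r : G.Walk v u, r.IsPath ∧ (∀ z, z ∈ r.support ↔ z ∈ c.support) ∧
      wcost ω c = ω s(u, v) + wcost ω r := by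
  cases c with
  | nil => exact absurd rfl hc.ne_nil
  | @cons _ w _ h r' =>
    have hr' : r'.IsPath := by
      apply Walk.IsPath.mk'
      have hnd := hc.support_nodup
      rwa [Walk.support_cons, List.tail_cons] at hnd
    rw [Walk.edges_cons, List.mem_cons] at he
    rcases he with he | he
    · obtain rfl : v = w := Sym2.congr_right.mp he
      refine ⟨r', hr', ?_, ?_⟩
      · intro z
        rw [Walk.support_cons]
        constructor
        · exact fun hz => List.mem_cons_of_mem _ hz
        · intro hz
          rcases List.mem_cons.mp hz with rfl | hz
          · exact r'.end_mem_support
          · exact hz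
      · rw [wcost_cons]
    · have hrev : s(u, v) ∈ r'.reverse.edges := by
        rw [Walk.edges_reverse]
        exact List.mem_reverse.mpr he
      obtain ⟨h2, q, hq⟩ := edge_at_start r'.reverse hr'.reverse hrev
      have huq : u ∉ q.support := by
        have hnd := hr'.reverse.support_nodup
        rw [hq, Walk.support_cons] at hnd
        exact (List.nodup_cons.mp hnd).1
      have hqpath : q.IsPath := by
        have := hr'.reverse
        rw [hq] at this
        exact this.of_cons
      have hmem : ∀ z, z ∈ r'.support ↔ z = u ∨ z ∈ q.support := by
        intro z
        rw [← List.mem_reverse, ← Walk.support_reverse, hq, Walk.support_cons]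
        simp
      refine ⟨q.append (Walk.cons h.symm Walk.nil), ?_, ?_, ?_⟩
      · apply Walk.IsPath.mk'
        rw [Walk.support_append, List.nodup_append]
        refine ⟨hqpath.support_nodup, by simp, ?_⟩
        intro z hz1 z' hz2 hzz'
        simp only [Walk.support_cons, Walk.support_nil, List.tail_cons,
          List.mem_singleton] at hz2
        subst hzz'
        exact huq (hz2 ▸ hz1)
      · intro z
        simp only [Walk.mem_support_append_iff, Walk.support_cons, Walk.support_nil,
          List.mem_cons, List.mem_singleton, List.not_mem_nil, or_false]
        constructor
        · rintro (hz | rfl | rfl)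
          · exact Or.inr ((hmem z).mpr (Or.inr hz))
          · exact Or.inr r'.start_mem_support
          · exact Or.inl rfl
        · rintro (rfl | hz)
          · exact Or.inr (Or.inr rfl)
          · rcases (hmem z).mp hz with rfl | hz'
            · exact Or.inr (Or.inr rfl)
            · exact Or.inl hz'
      · rw [wcost_cons, wcost_append, wcost_cons, ← wcost_reverse r', hq, wcost_cons]
        have h1 : ω s(u, w) = ω s(w, u) := by rw [Sym2.eq_swap]
        have h2 : wcost ω (Walk.nil : G.Walk u u) = 0 := by simp [wcost]
        rw [h2, h1]
        ring

lemma mem_rotate_support {s t z : V} (c : G.Walk s s) (h : t ∈ c.support) :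
    z ∈ (c.rotate t h).support ↔ z ∈ c.support := by
  show z ∈ ((c.dropUntil t h).append (c.takeUntil t h)).support ↔ _
  rw [Walk.mem_support_append_iff, or_comm, ← Walk.mem_support_append_iff, Walk.take_spec]

lemma wcost_rotate {s t : V} (c : G.Walk s s) (h : t ∈ c.support) :
    wcost ω (c.rotate t h) = wcost ω c := by
  have hrot := c.rotate_edges t h
  exact (hrot.perm.map ω).sum_eq

lemma first_hit {s t : V} (p : G.Walk s t) (Pr : V → Prop) (hpt : Pr t) :
    ∃ (x : V) (q1 : G.Walk s x) (q2 : G.Walk x t), q1.append q2 = p ∧ Pr x ∧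
      ∀ z ∈ q1.support, Pr z → z = x := by
  classical
  induction p with
  | nil => exact ⟨_, Walk.nil, Walk.nil, rfl, hpt, fun z hz _ => by simpa using hz⟩
  | @cons s' w' t' h p ih =>
    by_cases hs : Pr s'
    · exact ⟨s', Walk.nil, Walk.cons h p, rfl, hs, fun z hz _ => by simpa using hz⟩
    · obtain ⟨x, q1, q2, hspec, hx, hmin⟩ := ih hpt
      refine ⟨x, Walk.cons h q1, q2, by rw [Walk.cons_append, hspec], hx, ?_⟩
      intro z hz hPz
      rw [Walk.support_cons, List.mem_cons] at hz
      rcases hz with rfl | hz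
      · exact absurd hPz hs
      · exact hmin z hz hPz

lemma cycle_two_arcs (hω : ∀ e ∈ G.edgeSet, 0 ≤ ω e) {b x y : V} (c : G.Walk b b)
    (hc : c.IsCycle) (hx : x ∈ c.support) (hy : y ∈ c.support)
    (hxy : x ≠ y) (hxb : x ≠ b) (hyb : y ≠ b) :
    ∃ (W1 : G.Walk x b) (W2 : G.Walk y b), W1.IsPath ∧ W2.IsPath ∧
      (∀ z, z ∈ W1.support → z ∈ W2.support → z = b) ∧
      y ∉ W1.support ∧ x ∉ W2.support ∧
      (∀ z ∈ W1.support, z ∈ c.support) ∧ (∀ z ∈ W2.support, z ∈ c.support) ∧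
      wcost ω W1 + wcost ω W2 ≤ wcost ω c := by
  obtain ⟨hPpath, hQpath, hshare⟩ := cycle_split c hc hx hxb
  set P := c.takeUntil x hx with hPdef
  set Q := c.dropUntil x hx with hQdef
  have hcost : wcost ω P + wcost ω Q = wcost ω c := by
    rw [← wcost_append, Walk.take_spec]
  by_cases hyP : y ∈ P.support
  · have hyQ : y ∉ Q.support := by
      intro h'
      rcases hshare y hyP h' with h'' | h''
      · exact hyb h''
      · exact hxy h''.symm
    have hW2'path : (P.takeUntil y hyP).IsPath := hPpath.takeUntil hyP
    have hxW2' : x ∉ (P.takeUntil y hyP).support := by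
      intro hxw
      exact hxy (path_split P hPpath hyP x hxw (Walk.end_mem_support _))
    refine ⟨Q, (P.takeUntil y hyP).reverse, hQpath, hW2'path.reverse, ?_, hyQ, ?_, ?_, ?_, ?_⟩
    · intro z hz1 hz2
      rw [Walk.support_reverse, List.mem_reverse] at hz2
      have hzP : z ∈ P.support := P.support_takeUntil_subset hyP hz2
      rcases hshare z hzP hz1 with h' | h'
      · exact h'
      · exact absurd (h' ▸ hz2) hxW2'
    · intro hxw
      rw [Walk.support_reverse, List.mem_reverse] at hxw
      exact hxW2' hxw
    · intro z hz
      exact c.support_dropUntil_subset hx hz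
    · intro z hz
      rw [Walk.support_reverse, List.mem_reverse] at hz
      exact c.support_takeUntil_subset hx (P.support_takeUntil_subset hyP hz)
    · have h1 : wcost ω (P.takeUntil y hyP) + wcost ω (P.dropUntil y hyP) = wcost ω P := by
        rw [← wcost_append, Walk.take_spec]
      have h2 : 0 ≤ wcost ω (P.dropUntil y hyP) := wcost_nonneg hω _
      rw [wcost_reverse]
      linarith
  · have hyQ : y ∈ Q.support := by
      have hor : y ∈ P.support ∨ y ∈ Q.support := by
        rw [← Walk.mem_support_append_iff, Walk.take_spec]
        exact hy
      exact hor.resolve_left hyP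
    have hW2path : (Q.dropUntil y hyQ).IsPath := hQpath.dropUntil hyQ
    have hxW2 : x ∉ (Q.dropUntil y hyQ).support := by
      intro hxw
      exact hxy (path_split Q hQpath hyQ x (Walk.start_mem_support _) hxw)
    refine ⟨P.reverse, Q.dropUntil y hyQ, hPpath.reverse, hW2path, ?_, ?_, hxW2, ?_, ?_, ?_⟩
    · intro z hz1 hz2
      rw [Walk.support_reverse, List.mem_reverse] at hz1
      have hzQ : z ∈ Q.support := Q.support_dropUntil_subset hyQ hz2
      rcases hshare z hz1 hzQ with h' | h'
      · exact h'
      · exact absurd (h' ▸ hz2) hxW2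
    · intro h'
      rw [Walk.support_reverse, List.mem_reverse] at h'
      exact hyP h'
    · intro z hz
      rw [Walk.support_reverse, List.mem_reverse] at hz
      exact c.support_takeUntil_subset hx hz
    · intro z hz
      exact c.support_dropUntil_subset hx (Q.support_dropUntil_subset hyQ hz)
    · have h1 : wcost ω (Q.takeUntil y hyQ) + wcost ω (Q.dropUntil y hyQ) = wcost ω Q := by
        rw [← wcost_append, Walk.take_spec]
      have h2 : 0 ≤ wcost ω (Q.takeUntil y hyQ) := wcost_nonneg hω _
      rw [wcost_reverse]
      linarith

end Aux

/-- triangle-like inequality for the bi-path metric. If `T ⊆ G`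
contains an elementary cycle through the edge `uv` and `a`, and one through `uv` and `b`,
where `a, b ∉ {u,v}`, then `G` contains a 2-multipath between `a` and `b` of cost at most
the sum of the costs of the two cycles minus `ω(uv)`. -/
theorem bipath_triangle {V : Type*} [Fintype V] (G T : SimpleGraph V) (hT : T ≤ G)
    (ω : Sym2 V → ℝ) (hω : ∀ e ∈ G.edgeSet, 0 < ω e)
    (u v a b : V) (huv : T.Adj u v)
    (hau : a ≠ u) (hav : a ≠ v) (hbu : b ≠ u) (hbv : b ≠ v) (hab : a ≠ b)
    (ca : T.Walk a a) (hca : ca.IsCycle) (hcae : s(u, v) ∈ ca.edges)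
    (cb : T.Walk b b) (hcb : cb.IsCycle) (hcbe : s(u, v) ∈ cb.edges) :
    ∃ p q : G.Walk a b, p.IsPath ∧ q.IsPath ∧ InternallyDisjoint p q ∧
      wcost ω p + wcost ω q ≤ wcost ω ca + wcost ω cb - ω s(u, v) := by
  classical
  have hωnn : ∀ e ∈ G.edgeSet, 0 ≤ ω e := fun e he => (hω e he).le
  have hedges_a : ∀ e ∈ ca.edges, e ∈ G.edgeSet := fun e he =>
    SimpleGraph.edgeSet_mono hT (ca.edges_subset_edgeSet he)
  have hedges_b : ∀ e ∈ cb.edges, e ∈ G.edgeSet := fun e he =>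
    SimpleGraph.edgeSet_mono hT (cb.edges_subset_edgeSet he)
  set caG := ca.transfer G hedges_a with hcaGdef
  set cbG := cb.transfer G hedges_b with hcbGdef
  have hcaGc : caG.IsCycle := hca.transfer _
  have hcbGc : cbG.IsCycle := hcb.transfer _
  have hcaGe : s(u, v) ∈ caG.edges := by
    rw [hcaGdef, SimpleGraph.Walk.edges_transfer]; exact hcae
  have hcbGe : s(u, v) ∈ cbG.edges := by
    rw [hcbGdef, SimpleGraph.Walk.edges_transfer]; exact hcbe
  have hwa : wcost ω caG = wcost ω ca := by
    simp [wcost, hcaGdef, SimpleGraph.Walk.edges_transfer]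
  have hwb : wcost ω cbG = wcost ω cb := by
    simp [wcost, hcbGdef, SimpleGraph.Walk.edges_transfer]
  have huvca : ω s(u, v) ≤ wcost ω caG := edge_le_wcost hωnn _ hcaGe
  have huvcb : ω s(u, v) ≤ wcost ω cbG := edge_le_wcost hωnn _ hcbGe
  by_cases hacb : a ∈ cbG.support
  · obtain ⟨h1, h2, h3⟩ := cycle_split cbG hcbGc hacb hab
    refine ⟨(cbG.takeUntil a hacb).reverse, cbG.dropUntil a hacb, h1.reverse, h2, ?_, ?_⟩
    · intro z hz1 hz2
      rw [SimpleGraph.Walk.support_reverse, List.mem_reverse] at hz1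
      rcases h3 z hz1 hz2 with h' | h'
      · exact Or.inr h'
      · exact Or.inl h'
    · have hsum : wcost ω (cbG.takeUntil a hacb) + wcost ω (cbG.dropUntil a hacb)
          = wcost ω cbG := by
        rw [← wcost_append, SimpleGraph.Walk.take_spec]
      rw [wcost_reverse]
      linarith
  by_cases hbca : b ∈ caG.support
  · obtain ⟨h1, h2, h3⟩ := cycle_split caG hcaGc hbca (fun h => hab h.symm)
    refine ⟨caG.takeUntil b hbca, (caG.dropUntil b hbca).reverse, h1, h2.reverse, ?_, ?_⟩
    · intro z hz1 hz2
      rw [SimpleGraph.Walk.support_reverse, List.mem_reverse] at hz2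
      exact h3 z hz1 hz2
    · have hsum : wcost ω (caG.takeUntil b hbca) + wcost ω (caG.dropUntil b hbca)
          = wcost ω caG := by
        rw [← wcost_append, SimpleGraph.Walk.take_spec]
      rw [wcost_reverse]
      linarith
  -- main case
  have huS : u ∈ caG.support := caG.fst_mem_support_of_mem_edges hcaGe
  set c' := caG.rotate u huS with hc'def
  have hc'cyc : c'.IsCycle := hcaGc.rotate huS
  have hc'e : s(u, v) ∈ c'.edges := ((caG.rotate_edges u huS).perm.mem_iff).mpr hcaGe
  obtain ⟨r, hrpath, hrsup, hrcost⟩ := cycle_cons_of_edge ω c' hc'cyc hc'e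
  have hwc' : wcost ω c' = wcost ω caG := wcost_rotate _ _
  have hsupc' : ∀ z, z ∈ c'.support ↔ z ∈ caG.support := fun z => mem_rotate_support _ _
  have har : a ∈ r.support := (hrsup a).mpr ((hsupc' a).mpr caG.start_mem_support)
  set P1 := r.dropUntil a har with hP1def
  set P2 := (r.takeUntil a har).reverse with hP2def
  have hP1path : P1.IsPath := hrpath.dropUntil har
  have hP2path : P2.IsPath := (hrpath.takeUntil har).reverse
  have hP2mem : ∀ z, z ∈ P2.support ↔ z ∈ (r.takeUntil a har).support := by
    intro z
    rw [hP2def, SimpleGraph.Walk.support_reverse, List.mem_reverse]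
  have hshare12 : ∀ z, z ∈ P1.support → z ∈ P2.support → z = a := by
    intro z h1 h2
    exact path_split r hrpath har z ((hP2mem z).mp h2) h1
  have hsub1 : ∀ z ∈ P1.support, z ∈ caG.support := fun z hz =>
    (hsupc' z).mp ((hrsup z).mp (r.support_dropUntil_subset har hz))
  have hsub2 : ∀ z ∈ P2.support, z ∈ caG.support := fun z hz =>
    (hsupc' z).mp ((hrsup z).mp (r.support_takeUntil_subset har ((hP2mem z).mp hz)))
  have huCb : u ∈ cbG.support := cbG.fst_mem_support_of_mem_edges hcbGe
  have hvCb : v ∈ cbG.support := by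
    apply cbG.fst_mem_support_of_mem_edges (t := v) (u := u)
    rw [Sym2.eq_swap]
    exact hcbGe
  obtain ⟨x, A1, E1, hA1spec, hxS, hA1min⟩ := first_hit P1 (· ∈ cbG.support) huCb
  obtain ⟨y, A2, E2, hA2spec, hyS, hA2min⟩ := first_hit P2 (· ∈ cbG.support) hvCb
  have hA1sub : ∀ z ∈ A1.support, z ∈ P1.support := by
    intro z hz
    rw [← hA1spec, SimpleGraph.Walk.mem_support_append_iff]
    exact Or.inl hz
  have hA2sub : ∀ z ∈ A2.support, z ∈ P2.support := by
    intro z hz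
    rw [← hA2spec, SimpleGraph.Walk.mem_support_append_iff]
    exact Or.inl hz
  have hA1path : A1.IsPath := by
    have h' := hP1path
    rw [← hA1spec] at h'
    exact h'.of_append_left
  have hA2path : A2.IsPath := by
    have h' := hP2path
    rw [← hA2spec] at h'
    exact h'.of_append_left
  have hxy : x ≠ y := by
    intro h
    have hx1 : x ∈ P1.support := hA1sub x A1.end_mem_support
    have hy2 : y ∈ P2.support := hA2sub y A2.end_mem_support
    have hxa : x = a := hshare12 x hx1 (h ▸ hy2)
    exact hacb (hxa ▸ hxS)
  have hxb : x ≠ b := by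
    intro h
    exact hbca (h ▸ hsub1 x (hA1sub x A1.end_mem_support))
  have hyb : y ≠ b := by
    intro h
    exact hbca (h ▸ hsub2 y (hA2sub y A2.end_mem_support))
  obtain ⟨W1, W2, hW1p, hW2p, hWshare, hyW1, hxW2, hW1sub, hW2sub, hWcost⟩ :=
    cycle_two_arcs hωnn cbG hcbGc hxS hyS hxy hxb hyb
  refine ⟨A1.append W1, A2.append W2, ?_, ?_, ?_, ?_⟩
  · apply SimpleGraph.Walk.IsPath.mk'
    rw [SimpleGraph.Walk.support_append, List.nodup_append]
    refine ⟨hA1path.support_nodup, hW1p.support_nodup.tail, ?_⟩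
    intro z hz1 z' hz2 hzz'
    subst hzz'
    have hxtail : x ∉ W1.support.tail := by
      have h' := hW1p.support_nodup
      rw [W1.support_eq_cons] at h'
      exact (List.nodup_cons.mp h').1
    exact hxtail ((hA1min z hz1 (hW1sub z (List.mem_of_mem_tail hz2))) ▸ hz2)
  · apply SimpleGraph.Walk.IsPath.mk'
    rw [SimpleGraph.Walk.support_append, List.nodup_append]
    refine ⟨hA2path.support_nodup, hW2p.support_nodup.tail, ?_⟩
    intro z hz1 z' hz2 hzz'
    subst hzz'
    have hytail : y ∉ W2.support.tail := by
      have h' := hW2p.support_nodup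
      rw [W2.support_eq_cons] at h'
      exact (List.nodup_cons.mp h').1
    exact hytail ((hA2min z hz1 (hW2sub z (List.mem_of_mem_tail hz2))) ▸ hz2)
  · intro z hz1 hz2
    rw [SimpleGraph.Walk.mem_support_append_iff] at hz1 hz2
    rcases hz1 with hz1 | hz1 <;> rcases hz2 with hz2 | hz2
    · exact Or.inl (hshare12 z (hA1sub z hz1) (hA2sub z hz2))
    · exact absurd ((hA1min z hz1 (hW2sub z hz2)) ▸ hz2) hxW2
    · exact absurd ((hA2min z hz2 (hW1sub z hz1)) ▸ hz1) hyW1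
    · exact Or.inr (hWshare z hz1 hz2)
  · have e1 : wcost ω A1 + wcost ω E1 = wcost ω P1 := by rw [← wcost_append, hA1spec]
    have e2 : wcost ω A2 + wcost ω E2 = wcost ω P2 := by rw [← wcost_append, hA2spec]
    have e3 : 0 ≤ wcost ω E1 := wcost_nonneg hωnn _
    have e4 : 0 ≤ wcost ω E2 := wcost_nonneg hωnn _
    have e5 : wcost ω (r.takeUntil a har) + wcost ω P1 = wcost ω r := by
      rw [hP1def, ← wcost_append, SimpleGraph.Walk.take_spec]
    have e6 : wcost ω P2 = wcost ω (r.takeUntil a har) := by rw [hP2def, wcost_reverse]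
    rw [wcost_append, wcost_append]
    linarith
end

section
/- Let H be a subgraph of weighted graph G such that for every set F of at most p−1 vertices and every edge uv of G with u,v ∉ F, there is a u-v path in H∖F with at most s edges and cost at most s·ω(uv). Then for every edge uv of G not in H, H contains a union of p internally vertex-disjoint u-v paths of total cost at most s·p·r(s,p)·ω(uv), where r(s,p) is the least integer r such that any graph in which no set of fewer than p vertices destroys all u-v paths of at most s edges contains p internally vertex-disjoint u-v paths each with at most r edges. -/
/-- Subgraph of `H` keeping only edges of weight at most `c`. -/
def capGraph {V : Type*} (H : SimpleGraph V) (ω : Sym2 V → ℝ) (c : ℝ) : SimpleGraph V where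
  Adj a b := H.Adj a b ∧ ω s(a, b) ≤ c
  symm := ⟨fun a b h => ⟨h.1.symm, by rw [Sym2.eq_swap]; exact h.2⟩⟩
  loopless := ⟨fun a h => H.loopless.irrefl a h.1⟩

lemma capGraph_edge {V : Type*} {H : SimpleGraph V} {ω : Sym2 V → ℝ} {c : ℝ} {e : Sym2 V}
    (he : e ∈ (capGraph H ω c).edgeSet) : e ∈ H.edgeSet ∧ ω e ≤ c := by
  induction e using Sym2.ind with
  | _ a b => exact ⟨he.1, he.2⟩

lemma capGraph_mem {V : Type*} {H : SimpleGraph V} {ω : Sym2 V → ℝ} {c : ℝ} {e : Sym2 V}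
    (heH : e ∈ H.edgeSet) (hec : ω e ≤ c) : e ∈ (capGraph H ω c).edgeSet := by
  induction e using Sym2.ind with
  | _ a b => exact ⟨heH, hec⟩

/-- Lemma 1 of the paper. Let `H ⊆ G` be an `s`-hop `(p-1)`-fault
tolerant spanner: for every fault set `F` of at most `p-1` vertices and every edge `uv`
of `G` avoiding `F`, `H ∖ F` contains a `u`-`v` path of at most `s` edges and cost at most
`s·ω(uv)`. Let `r` be such that any graph in which no set of fewer than `p` vertices
destroys all `u`-`v` paths of at most `s` edges contains a `p`-multipath whose paths have
at most `r` edges each. Then for every edge `uv` of `G` not in `H`, `H` contains a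
`p`-multipath between `u` and `v` of total cost at most `s·p·r·ω(uv)`. -/
theorem fault_tolerant_multipath {V : Type*} [Fintype V] [DecidableEq V]
    (G H : SimpleGraph V) (hH : H ≤ G) (ω : Sym2 V → ℝ)
    (hω : ∀ e ∈ G.edgeSet, 0 < ω e) (s p r : ℕ) (hs : 1 ≤ s) (hp : 1 ≤ p)
    (hfault : ∀ F : Finset V, F.card ≤ p - 1 → ∀ u v : V, G.Adj u v → u ∉ F → v ∉ F →
      ∃ w : H.Walk u v, w.length ≤ s ∧ (∀ x ∈ w.support, x ∉ F) ∧
        wcost ω w ≤ (s : ℝ) * ω s(u, v))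
    (hr : ∀ (P : SimpleGraph V) (a b : V), a ≠ b → ¬P.Adj a b →
      (∀ S : Finset V, S.card ≤ p - 1 → a ∉ S → b ∉ S →
        ∃ w : P.Walk a b, w.length ≤ s ∧ ∀ x ∈ w.support, x ∉ S) →
      ∃ Q : Fin p → P.Walk a b, IsMultipath Q ∧ ∀ i, (Q i).length ≤ r)
    (u v : V) (huv : G.Adj u v) (hnH : ¬H.Adj u v) :
    ∃ Q : Fin p → H.Walk u v, IsMultipath Q ∧
      ∑ i, wcost ω (Q i) ≤ (s : ℝ) * p * r * ω s(u, v) := by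
  classical
  set c : ℝ := (s : ℝ) * ω s(u, v) with hc
  have hωuv : 0 < ω s(u, v) := hω _ (G.mem_edgeSet.2 huv)
  have hc0 : 0 ≤ c := by positivity
  set P : SimpleGraph V := capGraph H ω c with hPdef
  have hPH : P ≤ H := fun a b h => h.1
  -- edges of cheap walks in H are in P
  have key : ∀ (w : H.Walk u v), wcost ω w ≤ c → ∀ e ∈ w.edges, e ∈ P.edgeSet := by
    intro w hw e he
    have hHe : e ∈ H.edgeSet := w.edges_subset_edgeSet he
    have hnonneg : ∀ x ∈ w.edges.map ω, 0 ≤ x := by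
      intro x hx
      obtain ⟨e', he', rfl⟩ := List.mem_map.1 hx
      exact le_of_lt (hω _ (SimpleGraph.edgeSet_mono hH (w.edges_subset_edgeSet he')))
    have hle : ω e ≤ wcost ω w :=
      List.single_le_sum hnonneg _ (List.mem_map_of_mem (f := ω) he)
    exact capGraph_mem hHe (hle.trans hw)
  have hcond : ∀ S : Finset V, S.card ≤ p - 1 → u ∉ S → v ∉ S →
      ∃ w : P.Walk u v, w.length ≤ s ∧ ∀ x ∈ w.support, x ∉ S := by
    intro S hS hu hv
    obtain ⟨w, hlen, hsupp, hcost⟩ := hfault S hS u v huv hu hv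
    refine ⟨w.transfer P (key w hcost), ?_, ?_⟩
    · rw [SimpleGraph.Walk.length_transfer]; exact hlen
    · intro x hx
      rw [SimpleGraph.Walk.support_transfer] at hx
      exact hsupp x hx
  obtain ⟨Q, hQmp, hQr⟩ := hr P u v huv.ne (fun h => hnH h.1) hcond
  have hQedges : ∀ i, ∀ e ∈ (Q i).edges, e ∈ H.edgeSet := by
    intro i e he
    exact (capGraph_edge ((Q i).edges_subset_edgeSet he)).1
  refine ⟨fun i => (Q i).transfer H (hQedges i), ⟨?_, ?_⟩, ?_⟩
  · intro i
    exact ((hQmp.1 i)).transfer _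
  · intro i j hij z hzi hzj
    rw [SimpleGraph.Walk.support_transfer] at hzi hzj
    exact hQmp.2 i j hij z hzi hzj
  · have hone : ∀ i, wcost ω ((Q i).transfer H (hQedges i)) ≤ (r : ℝ) * c := by
      intro i
      have hedges : ((Q i).transfer H (hQedges i)).edges = (Q i).edges :=
        SimpleGraph.Walk.edges_transfer _ _
      have hbound : ∀ x ∈ (Q i).edges.map ω, x ≤ c := by
        intro x hx
        obtain ⟨e', he', rfl⟩ := List.mem_map.1 hx
        exact (capGraph_edge ((Q i).edges_subset_edgeSet he')).2
      have hsum : ((Q i).edges.map ω).sum ≤ ((Q i).edges.map ω).length • c :=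
        List.sum_le_card_nsmul _ _ hbound
      have hlen : ((Q i).edges.map ω).length = (Q i).length := by
        rw [List.length_map, SimpleGraph.Walk.length_edges]
      calc wcost ω ((Q i).transfer H (hQedges i))
          = ((Q i).edges.map ω).sum := by rw [wcost, hedges]
        _ ≤ ((Q i).edges.map ω).length • c := hsum
        _ = ((Q i).length : ℝ) * c := by rw [hlen, nsmul_eq_mul]
        _ ≤ (r : ℝ) * c := by
            apply mul_le_mul_of_nonneg_right _ hc0
            exact_mod_cast hQr i
    calc ∑ i, wcost ω ((Q i).transfer H (hQedges i))
        ≤ ∑ _i : Fin p, (r : ℝ) * c := Finset.sum_le_sum fun i _ => hone i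
      _ = (p : ℝ) * ((r : ℝ) * c) := by
          rw [Finset.sum_const, Finset.card_univ, Fintype.card_fin, nsmul_eq_mul]
      _ = (s : ℝ) * p * r * ω s(u, v) := by rw [hc]; ring
end

section
/- Let P_G be a union of p internally vertex-disjoint paths from x to y in a graph G, and suppose for each edge uv of P_G we have a subgraph Q_uv of a graph H that is a union of p internally vertex-disjoint u-v paths (with Q_uv = {uv} allowed when uv ∈ H). Then in the subgraph P_H = ⋃_{uv ∈ E(P_G)} Q_uv, no set S of at most p−1 vertices (excluding x and y) disconnects x from y. -/
/-- Pigeonhole: in a `p`-multipath, some path avoids any set `S` of at most `p-1`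
vertices not containing the endpoints. -/
lemma multipath_exists_avoiding {V : Type*} [DecidableEq V] {H : SimpleGraph V}
    {u v : V} {p : ℕ} (hp : 1 ≤ p) (R : Fin p → H.Walk u v) (hR : IsMultipath R)
    (S : Finset V) (hS : S.card ≤ p - 1) (hu : u ∉ S) (hv : v ∉ S) :
    ∃ k, ∀ z ∈ (R k).support, z ∉ S := by
  by_contra hc
  push_neg at hc
  choose f hf1 hf2 using hc
  have hinj : Function.Injective f := by
    intro i j hij
    by_contra hne
    rcases hR.2 i j hne (f i) (hf1 i) (hij ▸ hf1 j) with h | h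
    · exact hu (h ▸ hf2 i)
    · exact hv (h ▸ hf2 i)
  have hcard := Finset.card_le_card_of_injOn f
    (fun i _ => hf2 i) (hinj.injOn) (s := Finset.univ)
  simp [Finset.card_univ] at hcard
  omega

/-- Lift a walk in `G` whose edges all lie on the multipath `P` and whose support
avoids `S` to a walk in `H` avoiding `S`. -/
lemma walk_lift {V : Type*} [DecidableEq V]
    {G H : SimpleGraph V} {x y : V} {p : ℕ} (hp : 1 ≤ p)
    {P : Fin p → G.Walk x y}
    (Q : ∀ u v : V, G.Adj u v → Fin p → H.Walk u v)
    (hQ : ∀ (u v : V) (h : G.Adj u v), (∃ j, s(u, v) ∈ (P j).edges) →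
      IsMultipath (Q u v h))
    (S : Finset V) (hS : S.card ≤ p - 1) :
    ∀ {a b : V} (w : G.Walk a b),
      (∀ e ∈ w.edges, ∃ j, e ∈ (P j).edges) →
      (∀ z ∈ w.support, z ∉ S) →
      ∃ w' : H.Walk a b, ∀ z ∈ w'.support, z ∉ S := by
  intro a b w
  induction w with
  | nil =>
    intro _ hs
    exact ⟨SimpleGraph.Walk.nil, by simpa using hs⟩
  | @cons a c b h w ih =>
    intro he hs
    have hedge : ∃ j, s(a, c) ∈ (P j).edges := he _ (by simp)
    have ha : a ∉ S := hs a (by simp)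
    have hc : c ∉ S := hs c (by simp)
    obtain ⟨k, hk⟩ := multipath_exists_avoiding hp (Q a c h) (hQ a c h hedge) S hS ha hc
    obtain ⟨w'', hw''⟩ := ih (fun e hee => he e (by simp [hee]))
      (fun z hz => hs z (by simp [hz]))
    refine ⟨(Q a c h k).append w'', ?_⟩
    intro z hz
    rw [SimpleGraph.Walk.mem_support_append_iff] at hz
    rcases hz with hz | hz
    · exact hk z hz
    · exact hw'' z hz

/-- connectivity lemma. Let `P` be a `p`-multipath from `x` to `y` in
`G`, and for each edge `uv` occurring in `P`, let `Q u v _ : Fin p → H.Walk u v` be a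
`p`-multipath between `u` and `v` in the graph `H`, where every edge of `H` comes from
one of these multipaths (`H` is the union `P_H` of the `Q_uv`). Then no set `S` of at
most `p-1` vertices (excluding `x` and `y`) disconnects `x` from `y` in `H`. -/
theorem union_multipath_connectivity {V : Type*} [Fintype V] [DecidableEq V]
    (G H : SimpleGraph V) (x y : V) (hxy : x ≠ y) (p : ℕ) (hp : 1 ≤ p)
    (P : Fin p → G.Walk x y) (hP : IsMultipath P)
    (Q : ∀ u v : V, G.Adj u v → Fin p → H.Walk u v)
    (hQ : ∀ (u v : V) (h : G.Adj u v), (∃ j, s(u, v) ∈ (P j).edges) →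
      IsMultipath (Q u v h))
    (hunion : ∀ e ∈ H.edgeSet, ∃ (u v : V) (h : G.Adj u v) (i : Fin p),
      (∃ j, s(u, v) ∈ (P j).edges) ∧ e ∈ (Q u v h i).edges) :
    ∀ S : Finset V, S.card ≤ p - 1 → x ∉ S → y ∉ S →
      ∃ w : H.Walk x y, ∀ z ∈ w.support, z ∉ S := by
  intro S hS hx hy
  obtain ⟨i, hi⟩ := multipath_exists_avoiding hp P hP S hS hx hy
  exact walk_lift hp Q hQ S hS (P i) (fun e hee => ⟨i, hee⟩) hi
end

section
/- For s = 3, the minimum number of vertices whose removal destroys all u-v paths with at most 3 edges equals the maximum number of internally vertex-disjoint u-v paths each having at most 3 edges, for any two non-adjacent vertices u, v in a finite graph. -/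
open Finset

lemma konig_aux {α : Type*} [DecidableEq α] [Fintype α] (X Y : Finset α) (hXY : Disjoint X Y)
    (R : α → α → Prop) [DecidableRel R] :
    ∃ (T : Finset α) (M : Finset (α × α)),
      T ⊆ X ∪ Y ∧ T.card = M.card ∧
      (∀ x ∈ X, ∀ y ∈ Y, R x y → x ∈ T ∨ y ∈ T) ∧
      (∀ p ∈ M, p.1 ∈ X ∧ p.2 ∈ Y ∧ R p.1 p.2) ∧
      (∀ p ∈ M, ∀ q ∈ M, p ≠ q →
        p.1 ≠ q.1 ∧ p.1 ≠ q.2 ∧ p.2 ≠ q.1 ∧ p.2 ≠ q.2) := by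
  classical
  set N : Finset α → Finset α := fun W => Y.filter (fun y => ∃ x ∈ W, R x y) with hN
  obtain ⟨W₀, hW₀mem, hW₀min⟩ := Finset.exists_min_image X.powerset
      (fun W => (X \ W).card + (N W).card) ⟨∅, Finset.empty_mem_powerset X⟩
  have hW₀X : W₀ ⊆ X := Finset.mem_powerset.mp hW₀mem
  set t := (X \ W₀).card + (N W₀).card with ht
  have hNY : ∀ W, N W ⊆ Y := fun W => filter_subset _ _
  have htX : t ≤ X.card := by
    have h := hW₀min ∅ (Finset.empty_mem_powerset X)
    have : N ∅ = ∅ := by simp [hN]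
    simp [this] at h
    omega
  set d := X.card - t with hd
  set tfun : {x // x ∈ X} → Finset (α ⊕ Fin d) := fun x =>
    ((Y.filter (fun y => R x.1 y)).image Sum.inl) ∪ ((Finset.univ : Finset (Fin d)).image Sum.inr)
    with htfun
  have hall : ∀ s : Finset {x // x ∈ X}, s.card ≤ (s.biUnion tfun).card := by
    intro s
    rcases s.eq_empty_or_nonempty with rfl | hs
    · simp
    set s' := s.image Subtype.val with hs'
    have hs'X : s' ⊆ X := by
      intro a ha
      obtain ⟨x, _, rfl⟩ := mem_image.mp ha
      exact x.2
    have hcard : s'.card = s.card := card_image_of_injective _ Subtype.val_injective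
    have hsub : (N s').image Sum.inl ∪ (Finset.univ : Finset (Fin d)).image Sum.inr
        ⊆ s.biUnion tfun := by
      intro z hz
      rcases mem_union.mp hz with hz | hz
      · obtain ⟨y, hy, rfl⟩ := mem_image.mp hz
        rw [hN] at hy
        obtain ⟨hyY, x, hxs', hR⟩ := by simpa using mem_filter.mp hy
        obtain ⟨x', hx's, rfl⟩ := mem_image.mp hxs'
        exact mem_biUnion.mpr ⟨x', hx's, mem_union.mpr (Or.inl (mem_image_of_mem _
          (mem_filter.mpr ⟨hyY, hR⟩)))⟩
      · obtain ⟨x', hx's⟩ := hs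
        exact mem_biUnion.mpr ⟨x', hx's, mem_union.mpr (Or.inr hz)⟩
    have hdisj : Disjoint ((N s').image Sum.inl)
        ((Finset.univ : Finset (Fin d)).image Sum.inr) := by
      simp [Finset.disjoint_left]
    have h1 : (N s').card + d ≤ (s.biUnion tfun).card := by
      have := card_le_card hsub
      rw [card_union_of_disjoint hdisj, card_image_of_injective _ Sum.inl_injective,
        card_image_of_injective _ Sum.inr_injective, card_univ, Fintype.card_fin] at this
      exact this
    have h2 : t ≤ (X \ s').card + (N s').card := hW₀min s' (mem_powerset.mpr hs'X)
    have h3 : (X \ s').card = X.card - s'.card := card_sdiff_of_subset hs'X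
    have h4 : s'.card ≤ X.card := card_le_card hs'X
    omega
  obtain ⟨f, hfinj, hf⟩ := (Finset.all_card_le_biUnion_card_iff_exists_injective tfun).mp hall
  set L := (Finset.univ : Finset {x // x ∈ X}).filter (fun x => (f x).isLeft) with hL
  have hLright : ((Finset.univ : Finset {x // x ∈ X}).filter (fun x => ¬ (f x).isLeft)).card ≤ d := by
    set Lr := (Finset.univ : Finset {x // x ∈ X}).filter (fun x => ¬ (f x).isLeft) with hLr
    have himg : Lr.image f ⊆ (Finset.univ : Finset (Fin d)).image Sum.inr := by
      intro z hz
      obtain ⟨x, hx, rfl⟩ := mem_image.mp hz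
      have := (mem_filter.mp hx).2
      rcases h : f x with y | j
      · rw [h] at this; simp at this
      · exact mem_image_of_mem _ (mem_univ j)
    have := card_le_card himg
    rwa [card_image_of_injective _ hfinj, card_image_of_injective _ Sum.inr_injective,
      card_univ, Fintype.card_fin] at this
  have hLcard : t ≤ L.card := by
    have hsplit := Finset.card_filter_add_card_filter_not
      (s := (Finset.univ : Finset {x // x ∈ X})) (p := fun x => (f x).isLeft)
    have huniv : (Finset.univ : Finset {x // x ∈ X}).card = X.card := by
      simp [Fintype.card_coe]
    rw [hL]
    omega
  -- the matching
  set ext : {x // x ∈ X} → α × α := fun x => (x.1, Sum.elim id (fun _ => x.1) (f x)) with hext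
  set M₀ := L.image ext with hM₀
  have hM₀spec : ∀ p ∈ M₀, ∃ x : {x // x ∈ X}, x ∈ L ∧ p = (x.1, Sum.elim id (fun _ => x.1) (f x))
      ∧ f x = Sum.inl p.2 := by
    intro p hp
    obtain ⟨x, hx, rfl⟩ := mem_image.mp hp
    refine ⟨x, hx, rfl, ?_⟩
    have hleft := (mem_filter.mp hx).2
    rcases h : f x with y | j
    · simp [hext, h]
    · rw [h] at hleft; simp at hleft
  have hM₀card : t ≤ M₀.card := by
    have : M₀.card = L.card := by
      rw [hM₀]
      apply card_image_of_injOn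
      intro x hx y hy hxy
      exact Subtype.ext (congrArg Prod.fst hxy)
    omega
  obtain ⟨M, hMM₀, hMcard⟩ := Finset.exists_subset_card_eq hM₀card
  have hMspec : ∀ p ∈ M, p.1 ∈ X ∧ p.2 ∈ Y ∧ R p.1 p.2 := by
    intro p hp
    obtain ⟨x, hxL, hpx, hfx⟩ := hM₀spec p (hMM₀ hp)
    have h1 : p.1 = x.1 := by rw [hpx]
    have h2 := hf x
    rw [hfx, htfun] at h2
    rcases mem_union.mp h2 with h2 | h2
    · obtain ⟨y, hy, hyy⟩ := mem_image.mp h2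
      have : y = p.2 := Sum.inl_injective hyy
      subst this
      obtain ⟨hyY, hR⟩ := mem_filter.mp hy
      exact ⟨h1 ▸ x.2, hyY, by rw [h1]; exact hR⟩
    · obtain ⟨j, _, hj⟩ := mem_image.mp h2
      exact absurd hj (by simp)
  refine ⟨(X \ W₀) ∪ N W₀, M, ?_, ?_, ?_, hMspec, ?_⟩
  · intro a ha
    rcases mem_union.mp ha with h | h
    · exact mem_union.mpr (Or.inl (mem_sdiff.mp h).1)
    · exact mem_union.mpr (Or.inr (hNY _ h))
  · rw [card_union_of_disjoint, hMcard]
    exact disjoint_of_subset_left (sdiff_subset) (disjoint_of_subset_right (hNY _) hXY)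
  · intro x hx y hy hR
    by_cases hxT : x ∈ X \ W₀
    · exact Or.inl (mem_union.mpr (Or.inl hxT))
    · have hxW : x ∈ W₀ := by
        by_contra h
        exact hxT (mem_sdiff.mpr ⟨hx, h⟩)
      exact Or.inr (mem_union.mpr (Or.inr (mem_filter.mpr ⟨hy, x, hxW, hR⟩)))
  · intro p hp q hq hpq
    obtain ⟨x, hxL, hpx, hfx⟩ := hM₀spec p (hMM₀ hp)
    obtain ⟨y, hyL, hqy, hfy⟩ := hM₀spec q (hMM₀ hq)
    have hxy : x ≠ y := by
      rintro rfl
      exact hpq (by rw [hpx, hqy])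
    have h1 : p.1 ≠ q.1 := by
      rw [hpx, hqy]
      simp only []
      intro h
      exact hxy (Subtype.ext h)
    have h2 : p.2 ≠ q.2 := by
      intro h
      apply hxy
      apply hfinj
      rw [hfx, hfy, h]
    have hpX := (hMspec p hp).1
    have hpY := (hMspec p hp).2.1
    have hqX := (hMspec q hq).1
    have hqY := (hMspec q hq).2.1
    refine ⟨h1, ?_, ?_, h2⟩
    · intro h; exact (Finset.disjoint_left.mp hXY hpX) (h ▸ hqY)
    · intro h; exact (Finset.disjoint_left.mp hXY hqX) (h ▸ hpY)

open Finset SimpleGraph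

lemma walk_shape {V : Type*} {G : SimpleGraph V} {u v : V} (huv : u ≠ v) (hna : ¬G.Adj u v)
    (w : G.Walk u v) (hp : w.IsPath) (hl : w.length ≤ 3) :
    ∃ a b, G.Adj u a ∧ G.Adj b v ∧ (a = b ∨ G.Adj a b) ∧ a ∈ w.support ∧ b ∈ w.support ∧
      a ≠ u ∧ a ≠ v ∧ b ≠ u ∧ b ≠ v := by
  cases w with
  | nil => exact absurd rfl huv
  | cons h₁ w₁ =>
    rename_i a
    cases w₁ with
    | nil => exact absurd h₁ hna
    | cons h₂ w₂ =>
      rename_i b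
      cases w₂ with
      | nil =>
        exact ⟨a, a, h₁, h₂, Or.inl rfl, by simp, by simp,
          fun h => (h ▸ h₁).ne' rfl, fun h => (h ▸ h₂).ne rfl,
          fun h => (h ▸ h₁).ne' rfl, fun h => (h ▸ h₂).ne rfl⟩
      | cons h₃ w₃ =>
        cases w₃ with
        | nil =>
          simp only [Walk.isPath_def, Walk.support_cons, Walk.support_nil,
            List.nodup_cons, List.mem_cons, List.not_mem_nil, or_false,
            List.mem_singleton, List.nodup_nil, and_true, not_or] at hp
          obtain ⟨⟨hua', hub', huv'⟩, ⟨hab', hav'⟩, hbv'⟩ := hp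
          exact ⟨a, b, h₁, h₃, Or.inr h₂, by simp, by simp,
            fun h => hua' h.symm, hav', fun h => hub' h.symm, hbv'.1⟩
        | cons h₄ w₄ =>
          simp only [Walk.length_cons] at hl
          omega

lemma exists_walk {V : Type*} {G : SimpleGraph V} {u v : V} (huv : u ≠ v)
    {a b : V} (hua : G.Adj u a) (hbv : G.Adj b v) (hab : a = b ∨ G.Adj a b)
    (hav : a ≠ v) (hbu : b ≠ u) :
    ∃ w : G.Walk u v, w.IsPath ∧ w.length ≤ 3 ∧ a ∈ w.support ∧ b ∈ w.support ∧
      ∀ z ∈ w.support, z = u ∨ z = a ∨ z = b ∨ z = v := by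
  rcases hab with rfl | hab
  · refine ⟨Walk.cons hua (Walk.cons hbv Walk.nil), ?_, by simp, by simp, by simp, ?_⟩
    · simp [Walk.isPath_def, huv, hav, hua.ne, hua.ne']
    · intro z hz
      simp only [Walk.support_cons, Walk.support_nil, List.mem_cons, List.not_mem_nil,
        or_false, List.mem_singleton] at hz
      tauto
  · refine ⟨Walk.cons hua (Walk.cons hab (Walk.cons hbv Walk.nil)), ?_, by simp, by simp,
      by simp, ?_⟩
    · simp only [Walk.isPath_def, Walk.support_cons, Walk.support_nil,
        List.nodup_cons, List.mem_cons, List.not_mem_nil, or_false,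
        List.mem_singleton, List.nodup_nil, and_true, not_or]
      exact ⟨⟨hua.ne, Ne.symm hbu, huv⟩, ⟨hab.ne, hav⟩, hbv.ne, not_false⟩
    · intro z hz
      simp only [Walk.support_cons, Walk.support_nil, List.mem_cons, List.not_mem_nil,
        or_false, List.mem_singleton] at hz
      tauto


/-- `κ₃ = μ₃`. For non-adjacent vertices `u, v`, the minimum number of
vertices (excluding `u,v`) whose removal destroys all `u`-`v` paths with at most `3`
edges equals the maximum number of internally vertex-disjoint `u`-`v` paths with at most
`3` edges each. -/
theorem kappa_three_eq_mu_three {V : Type*} [Fintype V] [DecidableEq V]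
    (G : SimpleGraph V) (u v : V) (huv : u ≠ v) (hna : ¬G.Adj u v) :
    sInf {n : ℕ | ∃ S : Finset V, S.card = n ∧ u ∉ S ∧ v ∉ S ∧
        ∀ w : G.Walk u v, w.IsPath → w.length ≤ 3 → ∃ x ∈ w.support, x ∈ S}
      = sSup {m : ℕ | ∃ Q : Fin m → G.Walk u v,
          (∀ i, (Q i).IsPath ∧ (Q i).length ≤ 3) ∧
          ∀ i j, i ≠ j → InternallyDisjoint (Q i) (Q j)} := by
  classical
  set K := {n : ℕ | ∃ S : Finset V, S.card = n ∧ u ∉ S ∧ v ∉ S ∧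
      ∀ w : G.Walk u v, w.IsPath → w.length ≤ 3 → ∃ x ∈ w.support, x ∈ S} with hK
  set Mset := {m : ℕ | ∃ Q : Fin m → G.Walk u v,
      (∀ i, (Q i).IsPath ∧ (Q i).length ≤ 3) ∧
      ∀ i j, i ≠ j → InternallyDisjoint (Q i) (Q j)} with hMset
  -- easy direction: every family size is at most every cut size
  have key : ∀ n ∈ K, ∀ m ∈ Mset, m ≤ n := by
    rintro n ⟨S, hScard, huS, hvS, hScut⟩ m ⟨Q, hQ, hdisj⟩
    choose x hx hxS using fun i => hScut (Q i) (hQ i).1 (hQ i).2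
    have hinj : Function.Injective x := by
      intro i j hij
      by_contra hne
      rcases hdisj i j hne (x i) (hx i) (hij ▸ hx j) with h | h
      · exact huS (h ▸ hxS i)
      · exact hvS (h ▸ hxS i)
    calc m = (Finset.univ : Finset (Fin m)).card := by simp
      _ ≤ S.card := Finset.card_le_card_of_injOn x (fun i _ => hxS i) hinj.injOn
      _ = n := hScard
  have h0M : 0 ∈ Mset := ⟨fun i => i.elim0, fun i => i.elim0, fun i => i.elim0⟩
  have hKuniv : ((Finset.univ : Finset V) \ {u, v}).card ∈ K := by
    refine ⟨_, rfl, by simp, by simp, ?_⟩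
    intro w hp hl
    obtain ⟨a, b, hua, hbv, hab, haw, hbw, hau, hav, hbu, hbv'⟩ :=
      walk_shape huv hna w hp hl
    exact ⟨a, haw, by simp [hau, hav]⟩
  have hKne : K.Nonempty := ⟨_, hKuniv⟩
  have hbdd : BddAbove Mset := ⟨_, fun m hm => key _ hKuniv m hm⟩
  -- the construction
  set Xs := Finset.univ.filter (fun a => G.Adj u a ∧ ¬G.Adj a v) with hXs
  set Ys := Finset.univ.filter (fun b => G.Adj b v ∧ ¬G.Adj u b) with hYs
  set Cs := Finset.univ.filter (fun c => G.Adj u c ∧ G.Adj c v) with hCs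
  have hXYdisj : Disjoint Xs Ys := by
    rw [Finset.disjoint_left]
    intro a ha hb
    exact (Finset.mem_filter.mp hb).2.2 (Finset.mem_filter.mp ha).2.1
  obtain ⟨T, M, hTsub, hTcard, hcover, hMprop, hMdisj⟩ := konig_aux Xs Ys hXYdisj G.Adj
  have hCX : ∀ c ∈ Cs, c ∉ Xs := fun c hc hx =>
    (Finset.mem_filter.mp hx).2.2 (Finset.mem_filter.mp hc).2.2
  have hCY : ∀ c ∈ Cs, c ∉ Ys := fun c hc hy =>
    (Finset.mem_filter.mp hy).2.2 (Finset.mem_filter.mp hc).2.1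
  have hCT : Disjoint Cs T := by
    rw [Finset.disjoint_left]
    intro c hc hcT
    rcases Finset.mem_union.mp (hTsub hcT) with h | h
    · exact hCX c hc h
    · exact hCY c hc h
  set k := Cs.card + M.card with hk
  -- k ∈ K
  have hkK : k ∈ K := by
    refine ⟨Cs ∪ T, ?_, ?_, ?_, ?_⟩
    · rw [Finset.card_union_of_disjoint hCT, hTcard]
    · intro h
      rcases Finset.mem_union.mp h with h | h
      · exact G.irrefl (Finset.mem_filter.mp h).2.1
      · rcases Finset.mem_union.mp (hTsub h) with h | h
        · exact G.irrefl (Finset.mem_filter.mp h).2.1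
        · exact hna (Finset.mem_filter.mp h).2.1
      -- u ∈ Ys means Adj u v
    · intro h
      rcases Finset.mem_union.mp h with h | h
      · exact G.irrefl (Finset.mem_filter.mp h).2.2
      · rcases Finset.mem_union.mp (hTsub h) with h | h
        · exact hna (Finset.mem_filter.mp h).2.1
        · exact G.irrefl (Finset.mem_filter.mp h).2.1
    · intro w hp hl
      obtain ⟨a, b, hua, hbv, hab, haw, hbw, hau, hav, hbu, hbv'⟩ :=
        walk_shape huv hna w hp hl
      by_cases hCa : G.Adj a v
      · exact ⟨a, haw, Finset.mem_union.mpr (Or.inl (Finset.mem_filter.mpr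
          ⟨Finset.mem_univ _, hua, hCa⟩))⟩
      by_cases hCb : G.Adj u b
      · exact ⟨b, hbw, Finset.mem_union.mpr (Or.inl (Finset.mem_filter.mpr
          ⟨Finset.mem_univ _, hCb, hbv⟩))⟩
      rcases hab with rfl | hab
      · exact absurd hbv hCa
      have haX : a ∈ Xs := Finset.mem_filter.mpr ⟨Finset.mem_univ _, hua, hCa⟩
      have hbY : b ∈ Ys := Finset.mem_filter.mpr ⟨Finset.mem_univ _, hbv, hCb⟩
      rcases hcover a haX b hbY hab with h | h
      · exact ⟨a, haw, Finset.mem_union.mpr (Or.inr h)⟩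
      · exact ⟨b, hbw, Finset.mem_union.mpr (Or.inr h)⟩
  -- k ∈ Mset
  have hkM : k ∈ Mset := by
    set P := Cs.image (fun c => (c, c)) ∪ M with hP
    have hPdisjCM : Disjoint (Cs.image (fun c => (c, c))) M := by
      rw [Finset.disjoint_left]
      intro p hp hpM
      obtain ⟨c, hc, rfl⟩ := Finset.mem_image.mp hp
      exact hCX c hc (hMprop _ hpM).1
    have hPcard : P.card = k := by
      rw [hP, Finset.card_union_of_disjoint hPdisjCM,
        Finset.card_image_of_injective _ (fun a b h => congrArg Prod.fst h)]
    have hPpair : ∀ p ∈ P, G.Adj u p.1 ∧ G.Adj p.2 v ∧ (p.1 = p.2 ∨ G.Adj p.1 p.2) ∧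
        p.1 ≠ v ∧ p.2 ≠ u := by
      intro p hp
      rcases Finset.mem_union.mp hp with h | h
      · obtain ⟨c, hc, rfl⟩ := Finset.mem_image.mp h
        obtain ⟨-, h1, h2⟩ := Finset.mem_filter.mp hc
        exact ⟨h1, h2, Or.inl rfl, h2.ne, h1.ne'⟩
      · obtain ⟨h1, h2, h3⟩ := hMprop p h
        obtain ⟨-, h1a, -⟩ := Finset.mem_filter.mp h1
        obtain ⟨-, h2a, -⟩ := Finset.mem_filter.mp h2
        refine ⟨h1a, h2a, Or.inr h3, ?_, ?_⟩
        · rintro rfl; exact hna h1a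
        · rintro rfl; exact hna h2a
    have hPsep : ∀ p ∈ P, ∀ q ∈ P, p ≠ q →
        p.1 ≠ q.1 ∧ p.1 ≠ q.2 ∧ p.2 ≠ q.1 ∧ p.2 ≠ q.2 := by
      intro p hp q hq hpq
      have sepCM : ∀ c ∈ Cs, ∀ r ∈ M, c ≠ r.1 ∧ c ≠ r.2 := by
        intro c hc r hr
        constructor
        · intro hh; exact hCX c hc (by rw [hh]; exact (hMprop r hr).1)
        · intro hh; exact hCY c hc (by rw [hh]; exact (hMprop r hr).2.1)
      rcases Finset.mem_union.mp hp with h | h <;> rcases Finset.mem_union.mp hq with h' | h'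
      · obtain ⟨c, hc, rfl⟩ := Finset.mem_image.mp h
        obtain ⟨c', hc', rfl⟩ := Finset.mem_image.mp h'
        have : c ≠ c' := fun hcc => hpq (by rw [hcc])
        exact ⟨this, this, this, this⟩
      · obtain ⟨c, hc, rfl⟩ := Finset.mem_image.mp h
        obtain ⟨s1, s2⟩ := sepCM c hc q h'
        exact ⟨s1, s2, s1, s2⟩
      · obtain ⟨c, hc, rfl⟩ := Finset.mem_image.mp h'
        obtain ⟨s1, s2⟩ := sepCM c hc p h
        exact ⟨fun hh => s1 hh.symm, fun hh => s1 hh.symm,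
          fun hh => s2 hh.symm, fun hh => s2 hh.symm⟩
      · exact hMdisj p h q h' hpq
    choose wfun hw1 hw2 hw3 hw4 hw5 using fun (p : {p // p ∈ P}) =>
      exists_walk (G := G) huv (hPpair p.1 p.2).1 (hPpair p.1 p.2).2.1
        (hPpair p.1 p.2).2.2.1 (hPpair p.1 p.2).2.2.2.1 (hPpair p.1 p.2).2.2.2.2
    have e : Fin k ≃ {p // p ∈ P} := (finCongr hPcard.symm).trans P.equivFin.symm
    refine ⟨fun i => wfun (e i), fun i => ⟨hw1 _, hw2 _⟩, ?_⟩
    intro i j hij z hzi hzj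
    have hvalne : ((e i : {p // p ∈ P}) : V × V) ≠ ((e j : {p // p ∈ P}) : V × V) := by
      intro h
      exact hij (e.injective (Subtype.ext h))
    obtain ⟨s1, s2, s3, s4⟩ := hPsep _ (e i).2 _ (e j).2 hvalne
    rcases hw5 (e i) z hzi with h | h | h | h
    · exact Or.inl h
    · rcases hw5 (e j) z hzj with h' | h' | h' | h'
      · exact Or.inl h'
      · exact absurd (h.symm.trans h') s1
      · exact absurd (h.symm.trans h') s2
      · exact Or.inr h'
    · rcases hw5 (e j) z hzj with h' | h' | h' | h'
      · exact Or.inl h'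
      · exact absurd (h.symm.trans h') s3
      · exact absurd (h.symm.trans h') s4
      · exact Or.inr h'
    · exact Or.inr h
  apply le_antisymm
  · calc sInf K ≤ k := Nat.sInf_le hkK
      _ ≤ sSup Mset := le_csSup hbdd hkM
  · exact csSup_le ⟨0, h0M⟩ (fun m hm => le_csInf hKne (fun n hn => key n hn m hm))
end

section
/- If uv is a non-cut-edge of a finite graph G (i.e., uv lies on some cycle), then for every vertex w in the bi-connected component of G containing uv, there exists an elementary cycle in G passing through both the edge uv and the vertex w. -/
namespace CycleThroughEdgeAux

open SimpleGraph

variable {V : Type*} {G : SimpleGraph V}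

/-- From a path `R : a → b` with `b ∈ S`, extract the prefix up to the first vertex in `S`. -/
lemma aux_prefix {S : Set V} {a b : V} (R : G.Walk a b) (hR : R.IsPath) (hb : b ∈ S) :
    ∃ y : V, y ∈ S ∧ ∃ Q : G.Walk a y, Q.IsPath ∧ (∀ x ∈ Q.support, x ∈ S → x = y) ∧
      (∀ x ∈ Q.support, x ∈ R.support) := by
  induction R with
  | nil =>
      exact ⟨_, hb, Walk.nil, Walk.IsPath.nil, fun x hx _ => by simpa using hx,
        fun x hx => hx⟩
  | @cons a c b h p ih =>
      by_cases haS : a ∈ S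
      · exact ⟨a, haS, Walk.nil, Walk.IsPath.nil, fun x hx _ => by simpa using hx,
          fun x hx => by simp at hx; simp [hx]⟩
      · obtain ⟨hp, hanp⟩ := (Walk.cons_isPath_iff h p).1 hR
        obtain ⟨y, hyS, Q, hQ, honce, hsub⟩ := ih hp hb
        refine ⟨y, hyS, Walk.cons h Q, (Walk.cons_isPath_iff h Q).2
          ⟨hQ, fun hx => hanp (hsub a hx)⟩, ?_, ?_⟩
        · intro x hx hxS
          rw [Walk.support_cons, List.mem_cons] at hx
          rcases hx with rfl | hx
          · exact absurd hxS haS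
          · exact honce x hx hxS
        · intro x hx
          rw [Walk.support_cons, List.mem_cons] at hx ⊢
          rcases hx with rfl | hx
          · exact Or.inl rfl
          · exact Or.inr (hsub x hx)

/-- For a non-nil closed walk, membership in the support equals membership in its tail. -/
lemma aux_mem_tail {x : V} (c : G.Walk x x) (hc : ¬ c.Nil) {z : V} :
    z ∈ c.support ↔ z ∈ c.support.tail := by
  cases c with
  | nil => simp at hc
  | cons h p =>
      rw [Walk.support_cons, List.tail_cons, List.mem_cons]
      constructor
      · rintro (rfl | hz)
        · exact p.end_mem_support
        · exact hz
      · exact Or.inr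

lemma aux_mem_rotate [DecidableEq V] {x y z : V} {c : G.Walk x x} (hc : c.IsCycle)
    (hy : y ∈ c.support) : z ∈ (c.rotate y hy).support ↔ z ∈ c.support := by
  rw [aux_mem_tail _ (hc.rotate hy).not_nil, aux_mem_tail _ hc.not_nil,
    (Walk.support_rotate c y hy).mem_iff]

/-- Split a cycle at a vertex `y ≠ x`: one of the two arcs from `x` to `y` contains
the edge `e`, and it is a path whose support lies in the cycle's support. -/
lemma aux_arc [DecidableEq V] {x y : V} {c : G.Walk x x} (hc : c.IsCycle)
    (hy : y ∈ c.support) (hyx : y ≠ x) {e : Sym2 V} (he : e ∈ c.edges) :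
    ∃ A : G.Walk x y, A.IsPath ∧ e ∈ A.edges ∧ ∀ z ∈ A.support, z ∈ c.support := by
  set A1 := c.takeUntil y hy with hA1def
  set A2 := c.dropUntil y hy with hA2def
  have hspec : A1.append A2 = c := c.take_spec hy
  have hsup : c.support.tail = A1.support.tail ++ A2.support.tail := by
    have h1 := congrArg Walk.support hspec
    rw [Walk.support_append, A1.support_eq_cons] at h1
    have h2 : c.support = x :: c.support.tail := c.support_eq_cons
    rw [h2] at h1
    exact (List.cons.injEq _ _ _ _ ▸ h1 : _ ∧ _).2.symm ▸ rfl
  have hnd := hc.support_nodup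
  rw [hsup, List.nodup_append] at hnd
  obtain ⟨nd1, nd2, hdisj⟩ := hnd
  have hyA1 : y ∈ A1.support.tail := by
    have h := A1.end_mem_support
    rw [A1.support_eq_cons, List.mem_cons] at h
    rcases h with h | h
    · exact absurd h hyx
    · exact h
  have hxA2 : x ∈ A2.support.tail := by
    have h := A2.end_mem_support
    rw [A2.support_eq_cons, List.mem_cons] at h
    rcases h with h | h
    · exact absurd h.symm hyx
    · exact h
  have hA1path : A1.IsPath := by
    apply Walk.IsPath.mk'
    rw [A1.support_eq_cons, List.nodup_cons]
    exact ⟨fun hx => hdisj x hx x hxA2 rfl, nd1⟩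
  have hA2path : A2.IsPath := by
    apply Walk.IsPath.mk'
    rw [A2.support_eq_cons, List.nodup_cons]
    exact ⟨fun hx => hdisj y hyA1 y hx rfl, nd2⟩
  have he' : e ∈ A1.edges ++ A2.edges := by
    rw [← Walk.edges_append, hspec]; exact he
  rcases List.mem_append.1 he' with h | h
  · exact ⟨A1, hA1path, h, fun z hz => Walk.support_takeUntil_subset c hy hz⟩
  · refine ⟨A2.reverse, hA2path.reverse, ?_, ?_⟩
    · rw [Walk.edges_reverse, List.mem_reverse]; exact h
    · intro z hz
      rw [Walk.support_reverse, List.mem_reverse] at hz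
      exact Walk.support_dropUntil_subset c hy hz

/-- The existence of a cycle through `s(u,v)` and a vertex is preserved between
adjacent vertices of `C`. -/
lemma aux_step [DecidableEq V] {C : Set V} {u v : V} (huv : G.Adj u v)
    (hu : u ∈ C) (hv : v ∈ C)
    (h2conn : ∀ z ∈ C, (G.induce (C \ {z})).Connected)
    {w w' : V} (hw : w ∈ C) (hw'C : w' ∈ C) (haww' : G.Adj w w')
    (hP : ∃ (x : V) (c : G.Walk x x), c.IsCycle ∧ s(u, v) ∈ c.edges ∧ w' ∈ c.support) :
    ∃ (x : V) (c : G.Walk x x), c.IsCycle ∧ s(u, v) ∈ c.edges ∧ w ∈ c.support := by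
  obtain ⟨x, c, hc, he, hw'c⟩ := hP
  by_cases hwc : w ∈ c.support
  · exact ⟨x, c, hc, he, hwc⟩
  set c2 := c.rotate w' hw'c with hc2def
  have hc2 : c2.IsCycle := hc.rotate hw'c
  have hmem : ∀ z : V, z ∈ c2.support ↔ z ∈ c.support := fun z => aux_mem_rotate hc hw'c
  have he2 : s(u, v) ∈ c2.edges := (c.rotate_edges w' hw'c).mem_iff.2 he
  have huc : u ∈ c.support := c.fst_mem_support_of_mem_edges he
  have hvc : v ∈ c.support := c.snd_mem_support_of_mem_edges he
  obtain ⟨t, htC, htc, htw'⟩ : ∃ t, t ∈ C ∧ t ∈ c.support ∧ t ≠ w' := by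
    by_cases h : u = w'
    · exact ⟨v, hv, hvc, fun hvw' => huv.ne' (hvw'.trans h.symm)⟩
    · exact ⟨u, hu, huc, h⟩
  have hwne : w ≠ w' := haww'.ne
  have hreach := (h2conn w' hw'C).preconnected
    ⟨w, Set.mem_diff_singleton.2 ⟨hw, hwne⟩⟩ ⟨t, Set.mem_diff_singleton.2 ⟨htC, htw'⟩⟩
  obtain ⟨r0⟩ := hreach
  obtain ⟨R1, hR1sup⟩ : ∃ R1 : G.Walk w t, ∀ z ∈ R1.support, z ∈ C \ {w'} := by
    refine ⟨r0.map (SimpleGraph.Embedding.induce (C \ {w'})).toHom, ?_⟩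
    intro z hz
    replace hz : z ∈ (r0.map (SimpleGraph.Embedding.induce (C \ {w'})).toHom).support := hz
    rw [Walk.support_map, List.mem_map] at hz
    obtain ⟨a, _, rfl⟩ := hz
    exact a.2
  have htc2 : t ∈ c2.support := (hmem t).2 htc
  obtain ⟨y, hyc2, Q, hQpath, hQonce, hQsub⟩ :=
    aux_prefix (S := {z | z ∈ c2.support}) R1.toPath.1 R1.toPath.2 htc2
  have hQsub' : ∀ z ∈ Q.support, z ∈ C \ {w'} := fun z hz =>
    hR1sup z (Walk.support_toPath_subset R1 (hQsub z hz))
  have hw'Q : w' ∉ Q.support := fun h => (hQsub' w' h).2 rfl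
  have hyw' : y ≠ w' := fun h => hw'Q (h ▸ Q.end_mem_support)
  obtain ⟨A, hApath, heA, hAsub⟩ := aux_arc hc2 hyc2 hyw' he2
  have hwc2 : w ∉ c2.support := fun h => hwc ((hmem w).1 h)
  have hQrevnd : Q.reverse.support.Nodup := hQpath.reverse.support_nodup
  have hPpath : (A.append Q.reverse).IsPath := by
    apply Walk.IsPath.mk'
    rw [Walk.support_append]
    apply List.Nodup.append hApath.support_nodup
    · have h := hQrevnd
      rw [Q.reverse.support_eq_cons] at h
      exact (List.nodup_cons.1 h).2
    · intro a haA haQ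
      have haQ' : a ∈ Q.support := by
        have h : a ∈ Q.reverse.support := List.mem_of_mem_tail haQ
        rwa [Walk.support_reverse, List.mem_reverse] at h
      have hay : a = y := hQonce a haQ' (hAsub a haA)
      subst hay
      have h := hQrevnd
      rw [Q.reverse.support_eq_cons, List.nodup_cons] at h
      exact h.1 haQ
  have hedge : s(w, w') ∉ (A.append Q.reverse).edges := by
    rw [Walk.edges_append, List.mem_append]
    rintro (h | h)
    · exact hwc2 (hAsub _ (A.fst_mem_support_of_mem_edges h))
    · have h' : w' ∈ Q.reverse.support := Walk.snd_mem_support_of_mem_edges _ h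
      rw [Walk.support_reverse, List.mem_reverse] at h'
      exact hw'Q h'
  refine ⟨w, Walk.cons haww' (A.append Q.reverse),
    (Walk.cons_isCycle_iff _ _).2 ⟨hPpath, hedge⟩, ?_, Walk.start_mem_support _⟩
  rw [Walk.edges_cons, List.mem_cons]
  exact Or.inr (by rw [Walk.edges_append, List.mem_append]; exact Or.inl heA)

/-- Main induction: walk from `w` to `u` inside `C`. -/
lemma aux_reach [DecidableEq V] {C : Set V} {u v : V} (huv : G.Adj u v)
    (hu : u ∈ C) (hv : v ∈ C)
    (h2conn : ∀ z ∈ C, (G.induce (C \ {z})).Connected)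
    (hbase : ∃ c : G.Walk u u, c.IsCycle ∧ s(u, v) ∈ c.edges) :
    ∀ n (w : V), w ∈ C → (∃ p : G.Walk w u, (∀ z ∈ p.support, z ∈ C) ∧ p.length ≤ n) →
      ∃ (x : V) (c : G.Walk x x), c.IsCycle ∧ s(u, v) ∈ c.edges ∧ w ∈ c.support := by
  intro n
  induction n with
  | zero =>
      rintro w hwC ⟨p, hpC, hlen⟩
      cases p with
      | nil =>
          obtain ⟨c, hc, he⟩ := hbase
          exact ⟨u, c, hc, he, c.start_mem_support⟩
      | cons h q => simp at hlen
  | succ n ih =>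
      rintro w hwC ⟨p, hpC, hlen⟩
      cases p with
      | nil =>
          obtain ⟨c, hc, he⟩ := hbase
          exact ⟨u, c, hc, he, c.start_mem_support⟩
      | @cons _ w'' _ h q =>
          have hw''C : w'' ∈ C := hpC w'' (by
            rw [Walk.support_cons, List.mem_cons]; exact Or.inr q.start_mem_support)
          refine aux_step huv hu hv h2conn hwC hw''C h (ih w'' hw''C ⟨q, ?_, ?_⟩)
          · intro z hz
            exact hpC z (by rw [Walk.support_cons, List.mem_cons]; exact Or.inr hz)
          · simpa [Walk.length_cons, Nat.succ_le_succ_iff] using hlen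
end CycleThroughEdgeAux

open CycleThroughEdgeAux in
/-- If `uv` is a non-cut-edge of `G` (it lies on some cycle), then
every vertex `w` of the bi-connected component containing `uv` — i.e. any vertex lying
together with `u` and `v` in a set `C` whose induced subgraph remains connected after
removing any one vertex — lies on an elementary cycle through the edge `uv`. -/
theorem cycle_through_edge_of_biconnected {V : Type*} [Fintype V] [DecidableEq V]
    (G : SimpleGraph V) (u v w : V) (huv : G.Adj u v)
    (hcyc : ∃ c : G.Walk u u, c.IsCycle ∧ s(u, v) ∈ c.edges)
    (C : Set V) (hu : u ∈ C) (hv : v ∈ C) (hw : w ∈ C)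
    (h2conn : ∀ z ∈ C, (G.induce (C \ {z})).Connected) :
    ∃ c : G.Walk w w, c.IsCycle ∧ s(u, v) ∈ c.edges := by
  obtain ⟨x, c, hc, he, hwc⟩ :
      ∃ (x : V) (c : G.Walk x x), c.IsCycle ∧ s(u, v) ∈ c.edges ∧ w ∈ c.support := by
    by_cases hwv : w = v
    · obtain ⟨c, hc, he⟩ := hcyc
      exact ⟨u, c, hc, he, hwv ▸ c.snd_mem_support_of_mem_edges he⟩
    · have hreach := (h2conn v hv).preconnected
        ⟨w, Set.mem_diff_singleton.2 ⟨hw, hwv⟩⟩ ⟨u, Set.mem_diff_singleton.2 ⟨hu, huv.ne⟩⟩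
      obtain ⟨r⟩ := hreach
      obtain ⟨p, hpsub⟩ : ∃ p : G.Walk w u, ∀ z ∈ p.support, z ∈ C := by
        refine ⟨r.map (SimpleGraph.Embedding.induce (C \ {v})).toHom, ?_⟩
        intro z hz
        replace hz : z ∈ (r.map (SimpleGraph.Embedding.induce (C \ {v})).toHom).support := hz
        rw [SimpleGraph.Walk.support_map, List.mem_map] at hz
        obtain ⟨a, _, rfl⟩ := hz
        exact a.2.1
      exact aux_reach huv hu hv h2conn hcyc p.length w hw ⟨p, hpsub, le_refl _⟩
  exact ⟨c.rotate w hwc, hc.rotate hwc, (c.rotate_edges w hwc).mem_iff.2 he⟩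
end
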